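/- arXiv:1510.08341 — 8 statements merged into one kernel-verified Lean document; each statement's English description precedes it below -/
import Mathlib

section
/- For the generalized Gaussian density p(x) = (1/Z(θ,β)) e^{-β|x-m|^θ} with β, θ > 0, the entropy power and variance satisfy the exact relation e^{2h(p)} = A(θ) · Var(X), where A(θ) = 4 θ^{-2} (Γ(1/θ))^3 / Γ(3/θ) · e^{2/θ}. -/
open Real MeasureTheory Set

private lemma intOn_aux {q b p : ℝ} (hq : -1 < q) (hp : 0 < p) (hb : 0 < b) :
    IntegrableOn (fun x : ℝ => x ^ q * Real.exp (-b * x ^ p)) (Ioi 0) := by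
  have h1 : IntegrableOn (fun y : ℝ => y ^ ((q + 1) / p - 1) * Real.exp (-b * y)) (Ioi 0) := by
    have hqp : 0 < (q + 1) / p := by
      apply div_pos (by linarith) hp
    have h2 := integrableOn_rpow_mul_exp_neg_mul_rpow (p := 1) (s := (q + 1) / p - 1)
      (by linarith) one_pos hb
    simpa using h2
  have h3 := (integrableOn_Ioi_comp_rpow_iff'
    (fun y : ℝ => y ^ ((q + 1) / p - 1) * Real.exp (-b * y)) hp.ne').mpr h1
  refine (h3.congr_fun (fun x hx => ?_) measurableSet_Ioi)
  have hx' : (0 : ℝ) < x := hx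
  have key : p - 1 + p * ((q + 1) / p - 1) = q := by field_simp; ring
  dsimp only; rw [smul_eq_mul, ← Real.rpow_mul hx'.le, ← mul_assoc, ← Real.rpow_add hx', key]

private lemma integral_abs_sub (m : ℝ) (f : ℝ → ℝ) :
    (∫ x : ℝ, f |x - m|) = 2 * ∫ x in Ioi (0 : ℝ), f x := by
  rw [← integral_comp_abs (f := f)]
  exact integral_sub_right_eq_self (fun x => f |x|) m

/-- `A(θ) = 4 θ⁻² Γ(1/θ)³ / Γ(3/θ) · e^{2/θ}`. -/
noncomputable def A (θ : ℝ) : ℝ :=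
  4 / θ ^ 2 * (Real.Gamma (1 / θ)) ^ 3 / Real.Gamma (3 / θ) * Real.exp (2 / θ)

/-- For the generalized Gaussian density, `e^{2h(p)} = A(θ) · Var(X)`. -/
theorem generalized_gaussian_entropy_power_variance (m β θ : ℝ) (hβ : 0 < β) (hθ : 0 < θ)
    (p : ℝ → ℝ)
    (hp : ∀ x, p x =
      (2 * β ^ (-(1 / θ)) * θ⁻¹ * Real.Gamma (1 / θ))⁻¹ * Real.exp (-β * |x - m| ^ θ)) :
    Real.exp (2 * (-∫ x : ℝ, p x * Real.log (p x))) =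
      A θ * ∫ x : ℝ, (x - m) ^ 2 * p x := by
  have hθ' : θ ≠ 0 := hθ.ne'
  have hΓ1 : 0 < Real.Gamma (1 / θ) := Real.Gamma_pos_of_pos (by positivity)
  have hΓ3 : 0 < Real.Gamma (3 / θ) := Real.Gamma_pos_of_pos (by positivity)
  have hB1 : 0 < β ^ (-(1 / θ)) := Real.rpow_pos_of_pos hβ _
  set Z : ℝ := 2 * β ^ (-(1 / θ)) * θ⁻¹ * Real.Gamma (1 / θ) with hZdef
  have hZ : 0 < Z := by positivity
  -- variance integral
  have hV : (∫ x : ℝ, (x - m) ^ 2 * p x)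
      = Z⁻¹ * (2 * (β ^ (-(3 : ℝ) / θ) * (1 / θ) * Real.Gamma (3 / θ))) := by
    have e1 : (fun x : ℝ => (x - m) ^ 2 * p x)
        = fun x : ℝ => (fun t : ℝ => Z⁻¹ * (t ^ (2 : ℝ) * Real.exp (-β * t ^ θ))) |x - m| := by
      funext x
      rw [hp]
      have h2 : |x - m| ^ (2 : ℝ) = (x - m) ^ 2 := by
        rw [show (2 : ℝ) = ((2 : ℕ) : ℝ) by norm_num, Real.rpow_natCast, sq_abs]
      simp only [h2]
      ring
    rw [show (∫ x : ℝ, (x - m) ^ 2 * p x)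
        = ∫ x : ℝ, (fun t : ℝ => Z⁻¹ * (t ^ (2 : ℝ) * Real.exp (-β * t ^ θ))) |x - m| from by
      rw [← e1],
      integral_abs_sub m (fun t : ℝ => Z⁻¹ * (t ^ (2 : ℝ) * Real.exp (-β * t ^ θ))),
      integral_const_mul,
      integral_rpow_mul_exp_neg_mul_rpow hθ (by norm_num) hβ]
    norm_num
    ring
  -- entropy integral
  have hE : (∫ x : ℝ, p x * Real.log (p x)) = -(Real.log Z + 1 / θ) := by
    have e2 : (fun x : ℝ => p x * Real.log (p x))
        = fun x : ℝ => (fun t : ℝ =>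
            Z⁻¹ * -Real.log Z * (t ^ (0 : ℝ) * Real.exp (-β * t ^ θ))
            + -(Z⁻¹ * β) * (t ^ θ * Real.exp (-β * t ^ θ))) |x - m| := by
      funext x
      rw [hp]
      have hlog : Real.log (Z⁻¹ * Real.exp (-β * |x - m| ^ θ))
          = -Real.log Z + -β * |x - m| ^ θ := by
        rw [Real.log_mul (by positivity) (Real.exp_ne_zero _), Real.log_inv, Real.log_exp]
      simp only [hlog, Real.rpow_zero]
      ring
    rw [show (∫ x : ℝ, p x * Real.log (p x))
        = ∫ x : ℝ, (fun t : ℝ =>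
            Z⁻¹ * -Real.log Z * (t ^ (0 : ℝ) * Real.exp (-β * t ^ θ))
            + -(Z⁻¹ * β) * (t ^ θ * Real.exp (-β * t ^ θ))) |x - m| from by rw [← e2],
      integral_abs_sub m (fun t : ℝ =>
            Z⁻¹ * -Real.log Z * (t ^ (0 : ℝ) * Real.exp (-β * t ^ θ))
            + -(Z⁻¹ * β) * (t ^ θ * Real.exp (-β * t ^ θ))),
      integral_add ((intOn_aux (by norm_num) hθ hβ).const_mul _)
        ((intOn_aux (by linarith) hθ hβ).const_mul _),
      integral_const_mul, integral_const_mul,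
      integral_rpow_mul_exp_neg_mul_rpow hθ (by norm_num) hβ,
      integral_rpow_mul_exp_neg_mul_rpow hθ (by linarith) hβ]
    have hg : Real.Gamma ((θ + 1) / θ) = (1 / θ) * Real.Gamma (1 / θ) := by
      rw [show (θ + 1) / θ = 1 / θ + 1 by field_simp; ring, Real.Gamma_add_one (by positivity)]
    have hββ : β * β ^ (-(θ + 1) / θ) = β ^ (-(1 / θ)) := by
      nth_rewrite 1 [show β = β ^ (1 : ℝ) by rw [Real.rpow_one]]
      rw [← Real.rpow_add hβ]
      congr 1
      field_simp; ring
    have hββ' : β ^ (-(θ + 1) / θ) = β ^ (-(1 / θ)) / β := by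
      rw [eq_div_iff hβ.ne', mul_comm]; exact hββ
    rw [show ((0 : ℝ) + 1) / θ = 1 / θ from by norm_num,
        show (-((0 : ℝ) + 1)) / θ = -(1 / θ) from by norm_num [neg_div],
        hg, hββ', hZdef]
    field_simp
    ring
  rw [hE, neg_neg, hV]
  have hexp : Real.exp (2 * (Real.log Z + 1 / θ)) = Z ^ 2 * Real.exp (2 / θ) := by
    rw [mul_add, Real.exp_add, show (2 : ℝ) * Real.log Z = Real.log (Z ^ 2) from by
        rw [Real.log_pow]; norm_num,
      Real.exp_log (by positivity)]
    congr 1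
    ring
  rw [hexp]
  unfold A
  have hB3 : β ^ (-(3 : ℝ) / θ) = (β ^ (-(1 / θ))) ^ 3 := by
    rw [← Real.rpow_natCast (β ^ (-(1 / θ))) 3, ← Real.rpow_mul hβ.le]
    congr 1
    push_cast
    ring
  rw [hZdef, hB3]
  field_simp
  ring
end

section
/- The function A(θ) = 4 θ^{-2} (Γ(1/θ))^3 / Γ(3/θ) · e^{2/θ} attains its maximum on (0,∞) at θ = 2, with A(2) = 2πe. -/
open Real Filter Finset Topology

namespace AProof

/-! ### Tangent line inequality for `u ↦ log (u+a) + log (u+b) - 2 log (u+c)` -/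

noncomputable def gp (a b c u : ℝ) : ℝ := 1/(u+a) + 1/(u+b) - 2*(1/(u+c))

lemma hasDerivAt_g {a b c u : ℝ} (ha : 0 < u + a) (hb : 0 < u + b) (hc : 0 < u + c) :
    HasDerivAt (fun v => Real.log (v + a) + Real.log (v + b) - 2 * Real.log (v + c))
      (gp a b c u) u := by
  have h1 : HasDerivAt (fun v : ℝ => Real.log (v + a)) (1/(u+a)) u := by
    simpa [Function.comp_def] using (Real.hasDerivAt_log ha.ne').comp u ((hasDerivAt_id u).add_const a)
  have h2 : HasDerivAt (fun v : ℝ => Real.log (v + b)) (1/(u+b)) u := by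
    simpa [Function.comp_def] using (Real.hasDerivAt_log hb.ne').comp u ((hasDerivAt_id u).add_const b)
  have h3 : HasDerivAt (fun v : ℝ => Real.log (v + c)) (1/(u+c)) u := by
    simpa [Function.comp_def] using (Real.hasDerivAt_log hc.ne').comp u ((hasDerivAt_id u).add_const c)
  exact (h1.add h2).sub (h3.const_mul (2:ℝ))

lemma gp_strictAnti {a b c : ℝ} (ha : 0 ≤ a) (hb : 0 ≤ b) (hac : a < c) (hbc : b < c)
    {u v : ℝ} (hu : 0 < u) (huv : u < v) : gp a b c v < gp a b c u := by
  have hua : 0 < u + a := by linarith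
  have hub : 0 < u + b := by linarith
  have huc : 0 < u + c := by linarith
  have hva : 0 < v + a := by linarith
  have hvb : 0 < v + b := by linarith
  have hvc : 0 < v + c := by linarith
  have key : ∀ x : ℝ, 0 < u + x → 0 < v + x →
      1/(u+x) - 1/(v+x) = (v-u)/((u+x)*(v+x)) := by
    intro x hx hy
    rw [div_sub_div _ _ hx.ne' hy.ne']
    ring_nf
  have hA := key a hua hva
  have hB := key b hub hvb
  have hC := key c huc hvc
  have hda : (u+a)*(v+a) < (u+c)*(v+c) := by nlinarith
  have hdb : (u+b)*(v+b) < (u+c)*(v+c) := by nlinarith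
  have hCa : (v-u)/((u+c)*(v+c)) < (v-u)/((u+a)*(v+a)) :=
    div_lt_div_of_pos_left (by linarith) (by positivity) hda
  have hCb : (v-u)/((u+c)*(v+c)) < (v-u)/((u+b)*(v+b)) :=
    div_lt_div_of_pos_left (by linarith) (by positivity) hdb
  unfold gp
  linarith [hA, hB, hC, hCa, hCb]

lemma tangent_strict {a b c s t : ℝ} (ha : 0 ≤ a) (hb : 0 ≤ b) (hac : a < c) (hbc : b < c)
    (hs : 0 < s) (ht : 0 < t) (hne : t ≠ s) :
    (Real.log (t + a) + Real.log (t + b) - 2 * Real.log (t + c))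
      - (Real.log (s + a) + Real.log (s + b) - 2 * Real.log (s + c))
      < gp a b c s * (t - s) := by
  set g : ℝ → ℝ := fun v => Real.log (v + a) + Real.log (v + b) - 2 * Real.log (v + c) with hg
  have hd : ∀ u : ℝ, 0 < u → HasDerivAt g (gp a b c u) u := fun u hu =>
    hasDerivAt_g (by linarith) (by linarith) (by linarith)
  have hcont : ∀ x y : ℝ, 0 < x → ContinuousOn g (Set.Icc x y) := by
    intro x y hx z hz
    exact (hd z (lt_of_lt_of_le hx hz.1)).continuousAt.continuousWithinAt
  show g t - g s < gp a b c s * (t - s)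
  rcases lt_or_gt_of_ne hne with hlt | hgt
  · obtain ⟨ξ, hξ, hslope⟩ := exists_hasDerivAt_eq_slope g (gp a b c) hlt (hcont t s ht)
      (fun x hx => hd x (lt_trans ht hx.1))
    have hξs : gp a b c s < gp a b c ξ := gp_strictAnti ha hb hac hbc (lt_trans ht hξ.1) hξ.2
    have hst : (0:ℝ) < s - t := by linarith
    have h2 : gp a b c ξ * (s - t) = g s - g t := (eq_div_iff hst.ne').mp hslope
    nlinarith [mul_lt_mul_of_pos_right hξs hst]
  · obtain ⟨ξ, hξ, hslope⟩ := exists_hasDerivAt_eq_slope g (gp a b c) hgt (hcont s t hs)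
      (fun x hx => hd x (lt_trans hs hx.1))
    have hξs : gp a b c ξ < gp a b c s := gp_strictAnti ha hb hac hbc hs hξ.1
    have hts : (0:ℝ) < t - s := by linarith
    have h2 : gp a b c ξ * (t - s) = g t - g s := (eq_div_iff hts.ne').mp hslope
    nlinarith [mul_lt_mul_of_pos_right hξs hts]

/-! ### Basic quantities -/

noncomputable def hh (k : ℕ) : ℝ := 1/((k:ℝ) + 1/2)

noncomputable def d (m : ℕ) : ℝ :=
  1/(1/2 + ((m:ℝ) + 1/3)) + 1/(1/2 + ((m:ℝ) + 2/3)) - 2*(1/(1/2 + ((m:ℝ) + 1)))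

noncomputable def ell (t : ℝ) (k : ℕ) : ℝ := Real.log (t + k) - Real.log (1/2 + k)

noncomputable def C (t : ℝ) (m : ℕ) : ℝ :=
  (Real.log (t + ((m:ℝ) + 1/3)) - Real.log (1/2 + ((m:ℝ) + 1/3)))
  + (Real.log (t + ((m:ℝ) + 2/3)) - Real.log (1/2 + ((m:ℝ) + 2/3)))
  - 2 * (Real.log (t + ((m:ℝ) + 1)) - Real.log (1/2 + ((m:ℝ) + 1)))

noncomputable def G (t : ℝ) (j : ℕ) : ℝ := Real.log (3*t + j) - 3 * Real.log (t + j)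

noncomputable def fval (t : ℝ) : ℝ :=
  4 * t ^ 2 * Real.Gamma t ^ 3 / Real.Gamma (3*t) * Real.exp (2*t)

noncomputable def Q (t : ℝ) (n : ℕ) : ℝ :=
  4 * t ^ 2 * Real.GammaSeq t n ^ 3 / Real.GammaSeq (3*t) n * Real.exp (2*t)

noncomputable def gap (t : ℝ) : ℝ := d 0 * (t - 1/2) - C t 0

/-! ### The slope identity (Lemma D) -/

lemma lemD (N : ℕ) : ∑ m ∈ range N, d m =
    3*((∑ k ∈ range (3*N), hh (k+1)) - ∑ k ∈ range N, hh (k+1)) - 2 + 1/((N:ℝ) + 1/2) := by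
  induction N with
  | zero => simp
  | succ N ih =>
    have h3 : 3*(N+1) = (3*N)+1+1+1 := by ring
    rw [sum_range_succ, ih, h3, sum_range_succ, sum_range_succ, sum_range_succ, sum_range_succ]
    unfold d hh
    have hN : (0:ℝ) < (N:ℝ) + 1/2 := by positivity
    push_cast
    have h1 : (0:ℝ) < (N:ℝ) + 1 + 1/2 := by positivity
    have h2 : (0:ℝ) < 3*(N:ℝ) + 1 + 1/2 := by positivity
    have h4 : (0:ℝ) < 3*(N:ℝ) + 1 + 1 + 1/2 := by positivity
    have h5 : (0:ℝ) < 3*(N:ℝ) + 1 + 1 + 1 + 1/2 := by positivity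
    have h6 : (0:ℝ) < (N:ℝ) + 5/6 := by positivity
    have h7 : (0:ℝ) < (N:ℝ) + 7/6 := by positivity
    have h8 : (0:ℝ) < (N:ℝ) + 3/2 := by positivity
    field_simp
    ring

/-! ### The regrouping identity (Lemma B) -/

lemma lemB {t : ℝ} (ht : 0 < t) (N : ℕ) :
    ∑ j ∈ range (3*N), (G t (j+1) - G (1/2) (j+1)) =
      (∑ m ∈ range N, C t m)
        - 3*((∑ k ∈ range (3*N), ell t (k+1)) - ∑ k ∈ range N, ell t (k+1)) := by
  induction N with
  | zero => simp
  | succ N ih =>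
    have h3 : 3*(N+1) = (3*N)+1+1+1 := by ring
    rw [h3, sum_range_succ, sum_range_succ, sum_range_succ, sum_range_succ,
      sum_range_succ, sum_range_succ, sum_range_succ, ih]
    have expand : ∀ r : ℕ, 0 < (r:ℝ) →
        G t (3*N+r) - G (1/2) (3*N+r)
          = (Real.log (t + ((N:ℝ) + (r:ℝ)/3)) - Real.log (1/2 + ((N:ℝ) + (r:ℝ)/3)))
            - 3 * ell t (3*N+r) := by
      intro r hr
      unfold G ell
      have hc : ((3*N+r : ℕ) : ℝ) = 3*(N:ℝ) + (r:ℝ) := by push_cast; ring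
      rw [hc]
      have e1 : Real.log (3*t + (3*(N:ℝ) + r)) = Real.log 3 + Real.log (t + ((N:ℝ) + (r:ℝ)/3)) := by
        have : 3*t + (3*(N:ℝ) + r) = 3*(t + ((N:ℝ) + (r:ℝ)/3)) := by ring
        rw [this, Real.log_mul (by norm_num) (by positivity)]
      have e2 : Real.log (3*(1/2:ℝ) + (3*(N:ℝ) + r)) = Real.log 3 + Real.log (1/2 + ((N:ℝ) + (r:ℝ)/3)) := by
        have : 3*(1/2:ℝ) + (3*(N:ℝ) + r) = 3*((1/2:ℝ) + ((N:ℝ) + (r:ℝ)/3)) := by ring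
        rw [this, Real.log_mul (by norm_num) (by positivity)]
      rw [e1, e2]
      ring
    have g1 := expand 1 (by norm_num)
    have g2 := expand 2 (by norm_num)
    have g3 := expand 3 (by norm_num)
    have i1 : (3*N) + 1 = 3*N+1 := rfl
    have i2 : (3*N+1) + 1 = 3*N+2 := rfl
    have i3 : (3*N+1+1) + 1 = 3*N+3 := rfl
    rw [i1, i2, i3] at *
    rw [g1, g2, g3]
    unfold C ell
    rw [sum_range_succ]
    push_cast
    norm_num
    ring_nf

/-! ### Gamma function limit facts -/

lemma fval_pos {t : ℝ} (ht : 0 < t) : 0 < fval t := by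
  have h1 := Real.Gamma_pos_of_pos ht
  have h2 := Real.Gamma_pos_of_pos (by linarith : (0:ℝ) < 3*t)
  unfold fval
  positivity

lemma gammaSeq_pos {t : ℝ} (ht : 0 < t) {n : ℕ} (hn : 1 ≤ n) : 0 < Real.GammaSeq t n := by
  unfold Real.GammaSeq
  have h1 : (0:ℝ) < (n:ℝ) := by exact_mod_cast hn
  have h2 : 0 < ∏ j ∈ range (n+1), (t + (j:ℕ)) := by
    apply Finset.prod_pos; intro j _; positivity
  positivity

lemma Q_tendsto {t : ℝ} (ht : 0 < t) : Tendsto (Q t) atTop (𝓝 (fval t)) := by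
  have h2 := Real.Gamma_pos_of_pos (by linarith : (0:ℝ) < 3*t)
  have hg := Real.GammaSeq_tendsto_Gamma t
  have hg3 := Real.GammaSeq_tendsto_Gamma (3*t)
  unfold Q fval
  exact ((((hg.pow 3).const_mul (4*t^2)).div hg3 h2.ne').mul_const (Real.exp (2*t)))

lemma log_gammaSeq {t : ℝ} (ht : 0 < t) {n : ℕ} (hn : 1 ≤ n) :
    Real.log (Real.GammaSeq t n) =
      t * Real.log n + Real.log (Nat.factorial n : ℝ) - ∑ j ∈ range (n+1), Real.log (t + j) := by
  unfold Real.GammaSeq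
  have h1 : (0:ℝ) < (n:ℝ) := by exact_mod_cast hn
  have hterm : ∀ j ∈ range (n+1), t + (j:ℕ) ≠ (0:ℝ) := by
    intro j _; positivity
  have h2 : 0 < ∏ j ∈ range (n+1), (t + (j:ℕ)) := by
    apply Finset.prod_pos; intro j _; positivity
  have h3 : (0:ℝ) < (n:ℝ)^t := by positivity
  have h4 : (0:ℝ) < (Nat.factorial n : ℝ) := by positivity
  rw [Real.log_div (by positivity) h2.ne', Real.log_mul h3.ne' h4.ne',
    Real.log_rpow h1, Real.log_prod hterm]

lemma log_Q {t : ℝ} (ht : 0 < t) {n : ℕ} (hn : 1 ≤ n) :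
    Real.log (Q t n) = Real.log 4 + 2 * Real.log t + 2*t + 2 * Real.log (Nat.factorial n : ℝ)
      + ∑ j ∈ range (n+1), G t j := by
  have ht3 : (0:ℝ) < 3*t := by linarith
  have hgs := gammaSeq_pos ht hn
  have hgs3 := gammaSeq_pos ht3 hn
  unfold Q
  rw [Real.log_mul (by positivity) (Real.exp_pos _).ne', Real.log_exp,
    Real.log_div (by positivity) hgs3.ne',
    Real.log_mul (by positivity) (pow_pos hgs 3).ne',
    Real.log_mul (by norm_num) (pow_pos ht 2).ne',
    Real.log_pow, Real.log_pow,
    log_gammaSeq ht hn, log_gammaSeq ht3 hn]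
  unfold G
  rw [Finset.sum_sub_distrib, ← Finset.mul_sum]
  push_cast
  ring

lemma log_Q_diff {t : ℝ} (ht : 0 < t) {n : ℕ} (hn : 1 ≤ n) :
    Real.log (Q t n) - Real.log (Q (1/2) n) =
      2*(t - 1/2) + ∑ j ∈ range n, (G t (j+1) - G (1/2) (j+1)) := by
  rw [log_Q ht hn, log_Q (by norm_num : (0:ℝ) < 1/2) hn]
  have e1 : ∀ s : ℝ, 0 < s → ∑ j ∈ range (n+1), G s j
      = (Real.log 3 - 2 * Real.log s) + ∑ j ∈ range n, G s (j+1) := by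
    intro s hs
    rw [sum_range_succ']
    have : G s 0 = Real.log 3 - 2 * Real.log s := by
      unfold G
      simp only [Nat.cast_zero, add_zero]
      rw [show 3*s = 3*s from rfl, Real.log_mul (by norm_num) hs.ne']
      ring
    rw [this]; ring
  rw [e1 t ht, e1 (1/2) (by norm_num)]
  rw [Finset.sum_sub_distrib]
  ring

/-! ### Tangent bounds on `C` and the lower bound on `ell` -/

lemma C_lt {t : ℝ} (ht : 0 < t) (hne : t ≠ 1/2) (m : ℕ) : C t m < d m * (t - 1/2) := by
  have h := tangent_strict (a := (m:ℝ)+1/3) (b := (m:ℝ)+2/3) (c := (m:ℝ)+1)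
    (by positivity) (by positivity) (by norm_num) (by norm_num)
    (by norm_num : (0:ℝ) < 1/2) ht hne
  unfold C d gp at *
  linarith

lemma C_le {t : ℝ} (ht : 0 < t) (m : ℕ) : C t m ≤ d m * (t - 1/2) := by
  rcases eq_or_ne t (1/2) with rfl | hne
  · unfold C; norm_num
  · exact (C_lt ht hne m).le

lemma ell_ge {t : ℝ} (ht : 0 < t) (k : ℕ) : (t - 1/2)/(t + (k:ℝ)) ≤ ell t k := by
  have h1 : (0:ℝ) < t + k := by positivity
  have h2 : (0:ℝ) < 1/2 + (k:ℝ) := by positivity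
  have h := Real.log_le_sub_one_of_pos (show (0:ℝ) < (1/2 + (k:ℝ))/(t+k) by positivity)
  rw [Real.log_div h2.ne' h1.ne'] at h
  unfold ell
  have e0 : (1/2 + (k:ℝ))/(t+k) - 1 = (1/2 - t)/(t+k) := by field_simp; ring
  rw [e0] at h
  have e1 : (1/2 - t)/(t+(k:ℝ)) = -((t - 1/2)/(t+(k:ℝ))) := by ring
  rw [e1] at h
  linarith

lemma gap_pos {t : ℝ} (ht : 0 < t) (hne : t ≠ 1/2) : 0 < gap t := by
  have := C_lt ht hne 0
  unfold gap; linarith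

/-! ### The main chain inequality -/

lemma chain {t : ℝ} (ht : 0 < t) (hne : t ≠ 1/2) (K : ℕ) :
    2*(t - 1/2) + ∑ j ∈ range (3*(K+1)), (G t (j+1) - G (1/2) (j+1)) ≤
      (t - 1/2) * (1/(((K:ℝ)+1) + 1/2)) + 6*(t - 1/2)^2/((K:ℝ)+1) - gap t := by
  have hNpos : (0:ℝ) < (K:ℝ)+1 := by positivity
  rw [lemB ht (K+1)]
  have hsum : ∑ m ∈ range (K+1), C t m ≤ (∑ m ∈ range (K+1), d m) * (t-1/2) - gap t := by
    rw [sum_range_succ' (C t) K, sum_range_succ' d K, add_mul]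
    have h1 : ∑ m ∈ range K, C t (m+1) ≤ (∑ m ∈ range K, d (m+1)) * (t-1/2) := by
      rw [Finset.sum_mul]
      exact Finset.sum_le_sum fun i _ => C_le ht (i+1)
    unfold gap
    linarith
  rw [lemD (K+1)] at hsum
  have hIe : (∑ k ∈ range (3*(K+1)), ell t (k+1)) - ∑ k ∈ range (K+1), ell t (k+1)
      = ∑ k ∈ Ico (K+1) (3*(K+1)), ell t (k+1) :=
    (sum_Ico_eq_sub _ (by omega)).symm
  have hIh : (∑ k ∈ range (3*(K+1)), hh (k+1)) - ∑ k ∈ range (K+1), hh (k+1)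
      = ∑ k ∈ Ico (K+1) (3*(K+1)), hh (k+1) :=
    (sum_Ico_eq_sub _ (by omega)).symm
  rw [hIe]
  rw [hIh] at hsum
  set B : ℝ := (t-1/2)^2/(((K:ℝ)+1)*((K:ℝ)+1)) with hB
  have hterm : ∀ k ∈ Ico (K+1) (3*(K+1)), hh (k+1)*(t-1/2) - ell t (k+1) ≤ B := by
    intro k hk
    have hkN : K+1 ≤ k := (mem_Ico.mp hk).1
    have hkR : (K:ℝ)+1 ≤ (k:ℝ) := by exact_mod_cast hkN
    have h1 := ell_ge ht (k+1)
    have h2 : hh (k+1)*(t-1/2) - (t-1/2)/(t+((k+1:ℕ):ℝ))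
        = (t-1/2)^2/(((k:ℝ)+3/2)*(t+(k:ℝ)+1)) := by
      unfold hh
      push_cast
      have d1 : (0:ℝ) < (k:ℝ)+1+1/2 := by positivity
      have d2 : (0:ℝ) < t+((k:ℝ)+1) := by positivity
      field_simp
      ring
    have h3 : (t-1/2)^2/(((k:ℝ)+3/2)*(t+(k:ℝ)+1)) ≤ B := by
      rw [hB]
      apply div_le_div_of_nonneg_left (by positivity) (by positivity)
      nlinarith
    push_cast at h1 h2
    linarith
  have hcard : (Ico (K+1) (3*(K+1))).card = 2*(K+1) := by
    rw [Nat.card_Ico]; omega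
  have hsumtail : ∑ k ∈ Ico (K+1) (3*(K+1)), (hh (k+1)*(t-1/2) - ell t (k+1))
      ≤ 2*((K:ℝ)+1) * B := by
    have := Finset.sum_le_card_nsmul _ _ B hterm
    rw [hcard] at this
    have hns : (2*(K+1) : ℕ) • B = 2*((K:ℝ)+1) * B := by
      rw [nsmul_eq_mul]; push_cast; ring
    linarith [hns ▸ this]
  rw [Finset.sum_sub_distrib, ← Finset.sum_mul] at hsumtail
  have hcastK : ((K+1:ℕ):ℝ) = (K:ℝ)+1 := by push_cast; ring
  rw [hcastK] at hsum
  have expand : (3 * ∑ k ∈ Ico (K+1) (3*(K+1)), hh (k+1) - 2 + 1/(((K:ℝ)+1) + 1/2)) * (t - 1/2)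
      = 3*((∑ k ∈ Ico (K+1) (3*(K+1)), hh (k+1))*(t-1/2)) - 2*(t-1/2)
        + (1/(((K:ℝ)+1) + 1/2))*(t-1/2) := by ring
  rw [expand] at hsum
  have hBe : 6*((K:ℝ)+1)*B = 6*(t-1/2)^2/((K:ℝ)+1) := by
    rw [hB]; field_simp
  linarith

/-! ### The key strict inequality -/

lemma key {t : ℝ} (ht : 0 < t) (hne : t ≠ 1/2) : fval t < fval (1/2) := by
  have hfp := fval_pos ht
  have hfs := fval_pos (show (0:ℝ) < 1/2 by norm_num)
  have hlog : Tendsto (fun n => Real.log (Q t n) - Real.log (Q (1/2) n)) atTop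
      (𝓝 (Real.log (fval t) - Real.log (fval (1/2)))) :=
    (((Real.continuousAt_log hfp.ne').tendsto.comp (Q_tendsto ht)).sub
      ((Real.continuousAt_log hfs.ne').tendsto.comp (Q_tendsto (by norm_num))))
  have hidx : Tendsto (fun K : ℕ => 3*(K+1)) atTop atTop :=
    tendsto_atTop_atTop.mpr fun b => ⟨b, fun a ha => by omega⟩
  have h3 := hlog.comp hidx
  have h4 : Tendsto (fun K : ℕ => 2*(t - 1/2)
      + ∑ j ∈ range (3*(K+1)), (G t (j+1) - G (1/2) (j+1))) atTop
      (𝓝 (Real.log (fval t) - Real.log (fval (1/2)))) := by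
    apply h3.congr
    intro K
    exact log_Q_diff ht (n := 3*(K+1)) (by omega)
  have hb : Tendsto (fun K : ℕ => 1/((K:ℝ)+1)) atTop (𝓝 0) :=
    tendsto_one_div_add_atTop_nhds_zero_nat
  have ha : Tendsto (fun K : ℕ => 1/(((K:ℝ)+1) + 1/2)) atTop (𝓝 0) := by
    apply squeeze_zero (fun K => by positivity) (g := fun K : ℕ => 1/((K:ℝ)+1)) ?_ hb
    intro K
    exact one_div_le_one_div_of_le (by positivity) (by linarith)
  have he : Tendsto (fun K : ℕ => (t - 1/2) * (1/(((K:ℝ)+1) + 1/2))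
      + 6*(t - 1/2)^2/((K:ℝ)+1) - gap t) atTop (𝓝 (-gap t)) := by
    have h1 := ha.const_mul (t - 1/2)
    have h2 := hb.const_mul (6*(t - 1/2)^2)
    have := (h1.add h2).sub_const (gap t)
    simp only [mul_zero, add_zero, zero_sub] at this
    apply this.congr
    intro K
    field_simp
  have hle := le_of_tendsto_of_tendsto h4 he
    (Filter.Eventually.of_forall (chain ht hne))
  have : Real.log (fval t) < Real.log (fval (1/2)) := by
    have := gap_pos ht hne
    linarith
  exact (Real.log_lt_log_iff hfp hfs).mp this

/-! ### Relating `A` to `fval` -/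

lemma A_eq_fval {θ : ℝ} (hθ : 0 < θ) : A θ = fval (1/θ) := by
  unfold A fval
  rw [show 3*(1/θ) = 3/θ by ring, show 2*(1/θ) = 2/θ by ring,
    show 4*(1/θ)^2 = 4/θ^2 by field_simp]

lemma A_two : A 2 = 2 * Real.pi * Real.exp 1 := by
  unfold A
  have h12 : Real.Gamma (1/2) = Real.sqrt Real.pi := Real.Gamma_one_half_eq
  have h32 : Real.Gamma (3/2) = (1/2) * Real.sqrt Real.pi := by
    rw [show (3/2 : ℝ) = 1/2 + 1 by norm_num, Real.Gamma_add_one (by norm_num), h12]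
  rw [show (3/2 : ℝ) = 3/(2:ℝ) by norm_num] at h32
  rw [show (1/2 : ℝ) = 1/(2:ℝ) by norm_num] at h12
  rw [h12, h32]
  have hπ : 0 < Real.pi := Real.pi_pos
  have hs : Real.sqrt Real.pi ^ 2 = Real.pi := Real.sq_sqrt hπ.le
  have hsp : (0:ℝ) < Real.sqrt Real.pi := Real.sqrt_pos.mpr hπ
  have h1 : Real.exp (2/2 : ℝ) = Real.exp 1 := by norm_num
  have h3 : Real.sqrt Real.pi ^ 3 = Real.pi * Real.sqrt Real.pi := by
    rw [pow_succ, hs]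
  rw [h1, h3]
  field_simp
  ring

end AProof

/-- `A` attains its maximum on `(0,∞)` at `θ = 2`, with `A(2) = 2πe`. -/
theorem A_max_at_two :
    A 2 = 2 * Real.pi * Real.exp 1 ∧
    ∀ θ : ℝ, 0 < θ → A θ ≤ A 2 ∧ (A θ = A 2 ↔ θ = 2) := by
  refine ⟨AProof.A_two, fun θ hθ => ?_⟩
  rcases eq_or_ne θ 2 with rfl | hne
  · exact ⟨le_refl _, by simp⟩
  · have h2 : A 2 = AProof.fval (1/2) := by
      rw [AProof.A_eq_fval (by norm_num : (0:ℝ) < 2)]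
    have ht : (0:ℝ) < 1/θ := by positivity
    have htne : (1:ℝ)/θ ≠ 1/2 := by
      intro h
      apply hne
      field_simp at h
      linarith
    have hlt : A θ < A 2 := by
      rw [AProof.A_eq_fval hθ, h2]
      exact AProof.key ht htne
    exact ⟨hlt.le, by constructor <;> intro h <;> [exact absurd h hlt.ne; exact absurd h hne]⟩
end

section
/- The function A(θ) = 4 θ^{-2} (Γ(1/θ))^3 / Γ(3/θ) · e^{2/θ} is strictly increasing on (0,2] and strictly decreasing on [2,∞). -/
open Real Set Filter

/- auxiliary function: `g(x) = 2x + 2 log x + 3 log Γ(x) − log Γ(3x)`. -/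
noncomputable def gfun (x : ℝ) : ℝ :=
  2 * x + 2 * Real.log x + 3 * Real.log (Real.Gamma x) - Real.log (Real.Gamma (3 * x))

lemma A_eq {θ : ℝ} (hθ : 0 < θ) : A θ = 4 * Real.exp (gfun (1 / θ)) := by
  have hx : 0 < 1 / θ := by positivity
  have hΓ1 : 0 < Real.Gamma (1 / θ) := Real.Gamma_pos_of_pos hx
  have hΓ3 : 0 < Real.Gamma (3 * (1 / θ)) := Real.Gamma_pos_of_pos (by linarith)
  have h2 : (2 : ℝ) * Real.log (1/θ) = Real.log ((1/θ)^2) := by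
    rw [Real.log_pow]; push_cast; ring
  have h3 : (3 : ℝ) * Real.log (Real.Gamma (1/θ)) = Real.log ((Real.Gamma (1/θ))^3) := by
    rw [Real.log_pow]; push_cast; ring
  rw [gfun, h2, h3, Real.exp_sub, Real.exp_add, Real.exp_add,
    Real.exp_log (by positivity), Real.exp_log (by positivity), Real.exp_log hΓ3]
  have h1 : (3 : ℝ) / θ = 3 * (1/θ) := by ring
  have h2' : (2 : ℝ) / θ = 2 * (1/θ) := by ring
  rw [A, h1, h2']
  field_simp

/-- the `m`-th block function -/
noncomputable def phi (m : ℕ) (x : ℝ) : ℝ :=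
  Real.log (3*x + (3*(m:ℝ)+1)) + Real.log (3*x + (3*(m:ℝ)+2)) + Real.log (3*x + (3*(m:ℝ)+3))
    - 3 * Real.log (x + ((m:ℝ)+1))

noncomputable def phi' (m : ℕ) (x : ℝ) : ℝ :=
  3/(3*x + (3*(m:ℝ)+1)) + 3/(3*x + (3*(m:ℝ)+2)) + 3/(3*x + (3*(m:ℝ)+3))
    - 3 * (1/(x + ((m:ℝ)+1)))

noncomputable def phi'' (m : ℕ) (x : ℝ) : ℝ :=
  -(9/(3*x + (3*(m:ℝ)+1))^2) - 9/(3*x + (3*(m:ℝ)+2))^2 - 9/(3*x + (3*(m:ℝ)+3))^2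
    + 3 * (1/(x + ((m:ℝ)+1))^2)

lemma hasDerivAt_log_lin {a b x : ℝ} (h : 0 < a * x + b) :
    HasDerivAt (fun y => Real.log (a * y + b)) (a / (a * x + b)) x := by
  have h1 : HasDerivAt (fun y : ℝ => a * y + b) a x := by
    simpa using ((hasDerivAt_id x).const_mul a).add_const b
  simpa using h1.log h.ne'

lemma hasDerivAt_inv_lin {a b x : ℝ} (c : ℝ) (h : 0 < a * x + b) :
    HasDerivAt (fun y => c / (a * y + b)) (-(c * a) / (a * x + b)^2) x := by
  have h1 : HasDerivAt (fun y : ℝ => a * y + b) a x := by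
    simpa using ((hasDerivAt_id x).const_mul a).add_const b
  have h2 := (h1.inv h.ne').const_mul c
  convert h2 using 1
  · rfl
  · rfl
  · rfl
  ring

lemma phi_hasDerivAt (m : ℕ) {x : ℝ} (hx : 0 < x) : HasDerivAt (phi m) (phi' m x) x := by
  have hm : (0:ℝ) ≤ (m:ℝ) := Nat.cast_nonneg m
  have h1 : (0:ℝ) < 3*x + (3*(m:ℝ)+1) := by nlinarith
  have h2 : (0:ℝ) < 3*x + (3*(m:ℝ)+2) := by nlinarith
  have h3 : (0:ℝ) < 3*x + (3*(m:ℝ)+3) := by nlinarith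
  have h4 : (0:ℝ) < 1*x + ((m:ℝ)+1) := by nlinarith
  have := (((hasDerivAt_log_lin h1).add (hasDerivAt_log_lin h2)).add
      (hasDerivAt_log_lin h3)).sub ((hasDerivAt_log_lin h4).const_mul 3)
  convert this using 1
  · rfl
  · rfl
  · funext y; simp [phi, one_mul]
  · simp only [phi', one_mul, one_div]

lemma phi'_hasDerivAt (m : ℕ) {x : ℝ} (hx : 0 < x) : HasDerivAt (phi' m) (phi'' m x) x := by
  have hm : (0:ℝ) ≤ (m:ℝ) := Nat.cast_nonneg m
  have h1 : (0:ℝ) < 3*x + (3*(m:ℝ)+1) := by nlinarith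
  have h2 : (0:ℝ) < 3*x + (3*(m:ℝ)+2) := by nlinarith
  have h3 : (0:ℝ) < 3*x + (3*(m:ℝ)+3) := by nlinarith
  have h4 : (0:ℝ) < 1*x + ((m:ℝ)+1) := by nlinarith
  have := (((hasDerivAt_inv_lin 3 h1).add (hasDerivAt_inv_lin 3 h2)).add
      (hasDerivAt_inv_lin 3 h3)).sub ((hasDerivAt_inv_lin 1 h4).const_mul 3)
  convert this using 1
  · rfl
  · rfl
  · funext y; simp only [phi', one_mul, one_div, Pi.add_apply, Pi.sub_apply]
  · simp only [phi'', one_mul, one_div]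
    ring

lemma deriv2_phi (m : ℕ) {x : ℝ} (hx : 0 < x) : deriv^[2] (phi m) x = phi'' m x := by
  have h1 : deriv (phi m) =ᶠ[nhds x] phi' m := by
    filter_upwards [Ioi_mem_nhds hx] with y hy using (phi_hasDerivAt m hy).deriv
  show deriv (deriv (phi m)) x = phi'' m x
  rw [h1.deriv_eq]
  exact (phi'_hasDerivAt m hx).deriv

lemma phi_strictConcave (m : ℕ) : StrictConcaveOn ℝ (Ioi 0) (phi m) := by
  apply strictConcaveOn_of_deriv2_neg (convex_Ioi 0)
  · exact fun x hx => (phi_hasDerivAt m hx).differentiableAt.continuousAt.continuousWithinAt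
  · intro x hx
    rw [interior_Ioi, mem_Ioi] at hx
    rw [deriv2_phi m hx]
    have hm : (0:ℝ) ≤ (m:ℝ) := Nat.cast_nonneg m
    have ht : (0:ℝ) < x + ((m:ℝ)+1) := by nlinarith
    have h1 : (0:ℝ) < 3*x + (3*(m:ℝ)+1) := by nlinarith
    have h2 : (0:ℝ) < 3*x + (3*(m:ℝ)+2) := by nlinarith
    have k1 : 1/(x + ((m:ℝ)+1))^2 < 9/(3*x + (3*(m:ℝ)+1))^2 := by
      rw [div_lt_div_iff₀ (by positivity) (by positivity)]
      nlinarith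
    have k2 : 1/(x + ((m:ℝ)+1))^2 < 9/(3*x + (3*(m:ℝ)+2))^2 := by
      rw [div_lt_div_iff₀ (by positivity) (by positivity)]
      nlinarith
    have k3 : 9/(3*x + (3*(m:ℝ)+3))^2 = 1/(x + ((m:ℝ)+1))^2 := by
      rw [div_eq_div_iff (by positivity) (by positivity)]
      ring
    rw [phi'']
    rw [k3]
    linarith

noncomputable def sfun (n : ℕ) (x : ℝ) : ℝ :=
  2 * x + 2 * Real.log x + 3 * Real.BohrMollerup.logGammaSeq x n
    - Real.BohrMollerup.logGammaSeq (3 * x) (3 * n)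

lemma sum_range_mul3 (f : ℕ → ℝ) (n : ℕ) :
    ∑ k ∈ Finset.range (3*n+1), f k
      = f 0 + ∑ m ∈ Finset.range n, (f (3*m+1) + f (3*m+2) + f (3*m+3)) := by
  induction n with
  | zero => simp
  | succ n ih =>
      have e1 : 3*(n+1)+1 = ((3*n+1)+1+1)+1 := by omega
      rw [e1, Finset.sum_range_succ, Finset.sum_range_succ, Finset.sum_range_succ, ih,
        Finset.sum_range_succ]
      have e2 : 3*n+1+1 = 3*n+2 := by omega
      have e3 : 3*n+1+1+1 = 3*n+3 := by omega
      rw [e2, e3]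
      ring

lemma sfun_eq {x : ℝ} (hx : 0 < x) {n : ℕ} (hn : 1 ≤ n) :
    sfun n x = (2 - 3*Real.log 3)*x
      + (Real.log 3 + 3*Real.log ((Nat.factorial n : ℝ)) - Real.log ((Nat.factorial (3*n) : ℝ)))
      + ∑ m ∈ Finset.range n, phi m x := by
  have hn0 : ((n:ℝ)) ≠ 0 := Nat.cast_ne_zero.2 (by omega)
  have hlog3n : Real.log (3*(n:ℝ)) = Real.log 3 + Real.log (n:ℝ) :=
    Real.log_mul (by norm_num) hn0
  have hlog3x : Real.log (3*x) = Real.log 3 + Real.log x :=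
    Real.log_mul (by norm_num) hx.ne'
  rw [sfun, Real.BohrMollerup.logGammaSeq, Real.BohrMollerup.logGammaSeq,
    sum_range_mul3 (fun k => Real.log (3*x + k)) n,
    Finset.sum_range_succ' (fun m => Real.log (x + (m : ℕ))) n]
  push_cast
  simp only [add_zero]
  rw [hlog3x, hlog3n]
  simp only [phi, Finset.sum_sub_distrib, Finset.sum_add_distrib, ← Finset.mul_sum, add_zero]
  ring

lemma tendsto_sfun {x : ℝ} (hx : 0 < x) :
    Tendsto (fun n => sfun n x) atTop (nhds (gfun x)) := by
  have h1 := Real.BohrMollerup.tendsto_log_gamma hx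
  have h3x : (0:ℝ) < 3 * x := by linarith
  have hmul : Tendsto (fun n : ℕ => 3 * n) atTop atTop :=
    tendsto_atTop_mono (fun n => by simp; omega) tendsto_id
  have h2 := (Real.BohrMollerup.tendsto_log_gamma h3x).comp hmul
  have := (tendsto_const_nhds (x := 2*x + 2*Real.log x) (f := atTop (α := ℕ))).add
    ((h1.const_mul 3))
  have h4 := this.sub h2
  exact h4.congr (fun n => by simp only [sfun, Function.comp]) 

lemma gfun_strictConcave : StrictConcaveOn ℝ (Ioi 0) gfun := by
  refine ⟨convex_Ioi 0, fun x hx y hy hxy a b ha hb hab => ?_⟩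
  simp only [smul_eq_mul]
  rw [mem_Ioi] at hx hy
  have hz : 0 < a*x + b*y := by nlinarith
  set δ := phi 0 (a*x+b*y) - (a * phi 0 x + b * phi 0 y) with hδ
  have hδpos : 0 < δ := by
    have := (phi_strictConcave 0).2 (mem_Ioi.2 hx) (mem_Ioi.2 hy) hxy ha hb hab
    simp only [smul_eq_mul] at this
    rw [hδ]; linarith
  have key : ∀ n, 1 ≤ n → δ ≤ sfun n (a*x+b*y) - (a * sfun n x + b * sfun n y) := by
    intro n hn
    rw [sfun_eq hz hn, sfun_eq hx hn, sfun_eq hy hn]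
    have hsum : ∀ m ∈ Finset.range n, 0 ≤ phi m (a*x+b*y) - (a * phi m x + b * phi m y) := by
      intro m _
      have := ((phi_strictConcave m).concaveOn).2 (mem_Ioi.2 hx) (mem_Ioi.2 hy) ha.le hb.le hab
      simp only [smul_eq_mul] at this
      linarith
    have h0 : (0:ℕ) ∈ Finset.range n := Finset.mem_range.2 hn
    have hsle := Finset.single_le_sum hsum h0
    have hre : ∑ m ∈ Finset.range n, (phi m (a*x+b*y) - (a * phi m x + b * phi m y))
        = (∑ m ∈ Finset.range n, phi m (a*x+b*y))
          - (a * (∑ m ∈ Finset.range n, phi m x) + b * (∑ m ∈ Finset.range n, phi m y)) := by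
      rw [Finset.sum_sub_distrib, Finset.sum_add_distrib, Finset.mul_sum, Finset.mul_sum]
    rw [hre] at hsle
    have hb1 : b = 1 - a := by linarith
    subst hb1
    nlinarith [hsle]
  have hlim : Tendsto (fun n => sfun n (a*x+b*y) - (a * sfun n x + b * sfun n y)) atTop
      (nhds (gfun (a*x+b*y) - (a * gfun x + b * gfun y))) :=
    (tendsto_sfun hz).sub (((tendsto_sfun hx).const_mul a).add ((tendsto_sfun hy).const_mul b))
  have hfin : δ ≤ gfun (a*x+b*y) - (a * gfun x + b * gfun y) :=
    ge_of_tendsto hlim (eventually_atTop.2 ⟨1, key⟩)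
  linarith

lemma hasDerivAt_gfun_half : HasDerivAt gfun 0 (1/2 : ℝ) := by
  have hπ : 0 < Real.sqrt π := Real.sqrt_pos.2 Real.pi_pos
  set d1 := -Real.sqrt π * (Real.eulerMascheroniConstant + 2*Real.log 2) with hd1def
  have hd1 : HasDerivAt Real.Gamma d1 (1/2 : ℝ) := Real.hasDerivAt_Gamma_one_half
  have hΓh : Real.Gamma (1/2 : ℝ) = Real.sqrt π := Real.Gamma_one_half_eq
  have hΓ32 : Real.Gamma (3/2 : ℝ) = (1/2) * Real.sqrt π := by
    rw [show (3/2 : ℝ) = 1/2 + 1 by norm_num, Real.Gamma_add_one (by norm_num), hΓh]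
  -- derivative of Gamma at 3/2
  have hsub : HasDerivAt (fun y : ℝ => y - 1) 1 (3/2 : ℝ) := (hasDerivAt_id _).sub_const 1
  have hcomp : HasDerivAt (fun y : ℝ => Real.Gamma (y - 1)) (d1 * 1) (3/2 : ℝ) := by
    have h32 : (3/2 : ℝ) - 1 = 1/2 := by norm_num
    exact HasDerivAt.comp _ (h32 ▸ hd1) hsub
  have hu : HasDerivAt (fun y : ℝ => (y - 1) * Real.Gamma (y - 1))
      (1 * Real.Gamma ((3/2:ℝ) - 1) + ((3/2:ℝ) - 1) * (d1 * 1)) (3/2 : ℝ) := hsub.mul hcomp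
  have hG32 : HasDerivAt Real.Gamma (Real.sqrt π + (1/2) * d1) (3/2 : ℝ) := by
    have heq : Real.Gamma =ᶠ[nhds (3/2 : ℝ)] fun y : ℝ => (y - 1) * Real.Gamma (y - 1) := by
      filter_upwards [Ioi_mem_nhds (by norm_num : (1:ℝ) < 3/2)] with y hy
      rw [mem_Ioi] at hy
      have h := Real.Gamma_add_one (show y - 1 ≠ 0 by intro h; rw [sub_eq_zero] at h; simp [h] at hy)
      rw [sub_add_cancel] at h
      exact h
    have := hu.congr_of_eventuallyEq heq
    convert this using 1
    · rfl
    · rfl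
    norm_num [hΓh]
  -- derivative of x ↦ Γ(3x) at 1/2
  have hmul3 : HasDerivAt (fun x : ℝ => 3 * x) 3 (1/2 : ℝ) := by
    simpa using (hasDerivAt_id (1/2 : ℝ)).const_mul 3
  have h3x : HasDerivAt (fun x : ℝ => Real.Gamma (3 * x)) ((Real.sqrt π + (1/2)*d1) * 3) (1/2 : ℝ) := by
    have h32 : (3:ℝ) * (1/2) = 3/2 := by norm_num
    exact HasDerivAt.comp _ (h32 ▸ hG32) hmul3
  have hΓ3half : Real.Gamma (3 * (1/2 : ℝ)) = (1/2) * Real.sqrt π := by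
    rw [show (3:ℝ) * (1/2) = 3/2 by norm_num, hΓ32]
  have hlog3 : HasDerivAt (fun x : ℝ => Real.log (Real.Gamma (3 * x)))
      (((Real.sqrt π + (1/2)*d1) * 3) / ((1/2) * Real.sqrt π)) (1/2 : ℝ) := by
    have := h3x.log (by rw [hΓ3half]; positivity)
    rwa [hΓ3half] at this
  have hlogΓ : HasDerivAt (fun x : ℝ => Real.log (Real.Gamma x)) (d1 / Real.sqrt π) (1/2 : ℝ) := by
    have := hd1.log (by rw [hΓh]; positivity)
    rwa [hΓh] at this
  have hlogx : HasDerivAt Real.log ((1/2 : ℝ))⁻¹ (1/2 : ℝ) := Real.hasDerivAt_log (by norm_num)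
  have hid : HasDerivAt (fun x : ℝ => 2 * x) 2 (1/2 : ℝ) := by
    simpa using (hasDerivAt_id (1/2 : ℝ)).const_mul 2
  have hg : HasDerivAt gfun
      (2 + 2 * ((1/2 : ℝ))⁻¹ + 3 * (d1 / Real.sqrt π)
        - ((Real.sqrt π + (1/2)*d1) * 3) / ((1/2) * Real.sqrt π)) (1/2 : ℝ) := by
    exact ((hid.add (hlogx.const_mul 2)).add (hlogΓ.const_mul 3)).sub hlog3
  have hval : (2 + 2 * ((1/2 : ℝ))⁻¹ + 3 * (d1 / Real.sqrt π)
      - ((Real.sqrt π + (1/2)*d1) * 3) / ((1/2) * Real.sqrt π)) = 0 := by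
    field_simp
    ring
  rwa [hval] at hg

lemma gfun_diff {x : ℝ} (hx : 0 < x) : DifferentiableAt ℝ gfun x := by
  have hne : ∀ y : ℝ, 0 < y → ∀ m : ℕ, y ≠ -(m:ℝ) := by
    intro y hy m
    have : -(m:ℝ) ≤ 0 := neg_nonpos.2 (Nat.cast_nonneg m)
    exact ne_of_gt (lt_of_le_of_lt this hy)
  have hΓ : DifferentiableAt ℝ Real.Gamma x := Real.differentiableAt_Gamma (hne x hx)
  have hΓ3 : DifferentiableAt ℝ Real.Gamma (3*x) :=
    Real.differentiableAt_Gamma (hne (3*x) (by linarith))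
  have h3 : DifferentiableAt ℝ (fun y : ℝ => Real.Gamma (3*y)) x :=
    hΓ3.comp x ((differentiableAt_id).const_mul 3)
  have hΓpos := Real.Gamma_pos_of_pos hx
  have hΓ3pos := Real.Gamma_pos_of_pos (show (0:ℝ) < 3*x by linarith)
  exact (((differentiableAt_id.const_mul 2).add
      ((Real.differentiableAt_log hx.ne').const_mul 2)).add
      ((hΓ.log hΓpos.ne').const_mul 3)).sub (h3.log hΓ3pos.ne')

lemma deriv_gfun_half : deriv gfun (1/2 : ℝ) = 0 := hasDerivAt_gfun_half.deriv

lemma gfun_mono : StrictMonoOn gfun (Ioc 0 (1/2 : ℝ)) := by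
  apply strictMonoOn_of_deriv_pos (convex_Ioc _ _)
  · exact fun x hx => (gfun_diff hx.1).continuousAt.continuousWithinAt
  · intro x hx
    rw [interior_Ioc] at hx
    have h := gfun_strictConcave.strictAntiOn_deriv (fun y hy => gfun_diff hy)
      (mem_Ioi.2 hx.1) (mem_Ioi.2 (by norm_num : (0:ℝ) < 1/2)) hx.2
    rw [deriv_gfun_half] at h
    linarith
  
lemma gfun_anti : StrictAntiOn gfun (Ici (1/2 : ℝ)) := by
  apply strictAntiOn_of_deriv_neg (convex_Ici _)
  · exact fun x hx => (gfun_diff (lt_of_lt_of_le (by norm_num) hx)).continuousAt.continuousWithinAt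
  · intro x hx
    rw [interior_Ici] at hx
    rw [mem_Ioi] at hx
    have h := gfun_strictConcave.strictAntiOn_deriv (fun y hy => gfun_diff hy)
      (mem_Ioi.2 (by norm_num : (0:ℝ) < 1/2)) (mem_Ioi.2 (by linarith)) hx
    rw [deriv_gfun_half] at h
    linarith

/-- `A` is strictly increasing on `(0,2]` and strictly decreasing on `[2,∞)`. -/
theorem A_strictMono_strictAnti :
    StrictMonoOn A (Set.Ioc 0 2) ∧ StrictAntiOn A (Set.Ici 2) := by
  constructor
  · intro θ₁ h₁ θ₂ h₂ h12
    obtain ⟨h1p, h1le⟩ := h₁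
    obtain ⟨h2p, h2le⟩ := h₂
    rw [A_eq h1p, A_eq h2p]
    have hx1 : (1/2 : ℝ) ≤ 1/θ₁ := by
      rw [div_le_div_iff₀ (by norm_num) h1p]; linarith
    have hx2 : (1/2 : ℝ) ≤ 1/θ₂ := by
      rw [div_le_div_iff₀ (by norm_num) h2p]; linarith
    have hlt : 1/θ₂ < 1/θ₁ := by
      rw [div_lt_div_iff₀ h2p h1p]; linarith
    have := gfun_anti (mem_Ici.2 hx2) (mem_Ici.2 hx1) hlt
    have h := Real.exp_lt_exp.2 this
    linarith
  · intro θ₁ h₁ θ₂ h₂ h12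
    rw [mem_Ici] at h₁ h₂
    have h1p : (0:ℝ) < θ₁ := by linarith
    have h2p : (0:ℝ) < θ₂ := by linarith
    rw [A_eq h1p, A_eq h2p]
    have hx1 : 1/θ₁ ∈ Ioc (0:ℝ) (1/2) := by
      constructor
      · positivity
      · rw [div_le_div_iff₀ h1p (by norm_num)]; linarith
    have hx2 : 1/θ₂ ∈ Ioc (0:ℝ) (1/2) := by
      constructor
      · positivity
      · rw [div_le_div_iff₀ h2p (by norm_num)]; linarith
    have hlt : 1/θ₂ < 1/θ₁ := by
      rw [div_lt_div_iff₀ h2p h1p]; linarith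
    have := gfun_mono hx2 hx1 hlt
    have h := Real.exp_lt_exp.2 this
    linarith
end

section
/- As θ → 0⁺, 1/A(θ) → ∞, i.e., A(θ) → 0 as θ → 0⁺. -/
lemma real_beta {a b : ℝ} (ha : 0 < a) (hb : 0 < b) :
    Real.Gamma a * Real.Gamma b =
      Real.Gamma (a + b) * ∫ t in (0:ℝ)..1, t ^ (a-1) * (1-t) ^ (b-1) := by
  have h := Complex.Gamma_mul_Gamma_eq_betaIntegral (s := (a:ℂ)) (t := (b:ℂ))
    (by simpa using ha) (by simpa using hb)
  have hβ : Complex.betaIntegral a b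
      = ((∫ t in (0:ℝ)..1, t ^ (a-1) * (1-t) ^ (b-1) : ℝ) : ℂ) := by
    rw [Complex.betaIntegral, ← intervalIntegral.integral_ofReal]
    refine intervalIntegral.integral_congr fun t ht => ?_
    rw [Set.uIcc_of_le (by norm_num : (0:ℝ) ≤ 1)] at ht
    rw [Complex.ofReal_mul, Complex.ofReal_cpow ht.1, Complex.ofReal_cpow (by linarith [ht.2])]
    push_cast
    ring
  rw [← Complex.ofReal_inj, Complex.ofReal_mul, Complex.ofReal_mul,
    ← Complex.Gamma_ofReal, ← Complex.Gamma_ofReal, ← Complex.Gamma_ofReal,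
    Complex.ofReal_add, h, hβ]

lemma beta_bound {x p : ℝ} (hx : 2 ≤ x) (hp : x - 1 ≤ p) :
    |∫ t in (0:ℝ)..1, t ^ (x-1) * (1-t) ^ p| ≤ (1/4 : ℝ) ^ (x-1) := by
  have h := intervalIntegral.norm_integral_le_of_norm_le_const
    (C := (1/4:ℝ)^(x-1)) (f := fun t : ℝ => t^(x-1)*(1-t)^p) (a := (0:ℝ)) (b := 1) ?_
  · simpa [Real.norm_eq_abs] using h
  · intro t ht
    rw [Set.uIoc_of_le (by norm_num : (0:ℝ) ≤ 1)] at ht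
    obtain ⟨ht0, ht1⟩ := ht
    have h1t : 0 ≤ 1 - t := by linarith
    rw [Real.norm_eq_abs,
      abs_of_nonneg (mul_nonneg (Real.rpow_nonneg ht0.le _) (Real.rpow_nonneg h1t _))]
    have hb : (1-t)^p ≤ (1-t)^(x-1) := by
      rcases eq_or_lt_of_le ht1 with h1 | h1
      · subst h1
        norm_num
        simp [Real.zero_rpow (ne_of_gt (by linarith : (0:ℝ) < p)),
          Real.zero_rpow (ne_of_gt (by linarith : (0:ℝ) < x - 1))]
      · exact Real.rpow_le_rpow_of_exponent_ge (by linarith) (by linarith) hp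
    calc t^(x-1)*(1-t)^p ≤ t^(x-1)*(1-t)^(x-1) :=
          mul_le_mul_of_nonneg_left hb (Real.rpow_nonneg ht0.le _)
      _ = (t*(1-t))^(x-1) := (Real.mul_rpow ht0.le h1t).symm
      _ ≤ (1/4)^(x-1) :=
          Real.rpow_le_rpow (mul_nonneg ht0.le h1t) (by nlinarith [sq_nonneg (t - 1/2)]) (by linarith)

/-- `A(θ) → 0` as `θ → 0⁺`, i.e. `1/A(θ) → ∞`. -/
theorem A_tendsto_zero : Filter.Tendsto A (nhdsWithin 0 (Set.Ioi 0)) (nhds 0) := by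
  set fA : ℝ → ℝ := fun x => 4 * x^2 * Real.Gamma x ^ 3 / Real.Gamma (3*x) * Real.exp (2*x)
    with hfA_def
  set g : ℝ → ℝ := fun x => 64 * x^2 * Real.exp ((2 - Real.log 16) * x) with hg_def
  -- the key bound
  have key : ∀ x : ℝ, 2 ≤ x → fA x ≤ g x := by
    intro x hx
    have hx0 : (0:ℝ) < x := by linarith
    have hΓ3 : 0 < Real.Gamma (3*x) := Real.Gamma_pos_of_pos (by linarith)
    set I₁ : ℝ := ∫ t in (0:ℝ)..1, t ^ (x-1) * (1-t) ^ (x-1) with hI₁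
    set I₂ : ℝ := ∫ t in (0:ℝ)..1, t ^ (x-1) * (1-t) ^ (2*x-1) with hI₂
    have b1 : Real.Gamma x * Real.Gamma x = Real.Gamma (2*x) * I₁ := by
      have := real_beta hx0 hx0
      rw [show x + x = 2*x by ring] at this
      exact this
    have b2 : Real.Gamma x * Real.Gamma (2*x) = Real.Gamma (3*x) * I₂ := by
      have := real_beta hx0 (by linarith : (0:ℝ) < 2*x)
      rw [show x + 2*x = 3*x by ring, show 2*x - 1 = 2*x-1 by ring] at this
      exact this
    have hΓ : Real.Gamma x ^ 3 = Real.Gamma (3*x) * (I₁ * I₂) := by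
      have : Real.Gamma x ^ 3 = (Real.Gamma x * Real.Gamma x) * Real.Gamma x := by ring
      rw [this, b1]
      calc Real.Gamma (2*x) * I₁ * Real.Gamma x
          = (Real.Gamma x * Real.Gamma (2*x)) * I₁ := by ring
        _ = Real.Gamma (3*x) * I₂ * I₁ := by rw [b2]
        _ = Real.Gamma (3*x) * (I₁ * I₂) := by ring
    have hfx : fA x = 4 * x^2 * (I₁ * I₂) * Real.exp (2*x) := by
      rw [hfA_def]
      simp only
      rw [hΓ]
      field_simp
    have hb1 : |I₁| ≤ (1/4:ℝ)^(x-1) := beta_bound hx le_rfl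
    have hb2 : |I₂| ≤ (1/4:ℝ)^(x-1) := beta_bound hx (by linarith)
    have habs : I₁ * I₂ ≤ (1/16:ℝ)^(x-1) := by
      calc I₁ * I₂ ≤ |I₁ * I₂| := le_abs_self _
        _ = |I₁| * |I₂| := abs_mul _ _
        _ ≤ (1/4:ℝ)^(x-1) * (1/4:ℝ)^(x-1) := by
            exact mul_le_mul hb1 hb2 (abs_nonneg _) (Real.rpow_nonneg (by norm_num) _)
        _ = (1/16:ℝ)^(x-1) := by
            rw [← Real.mul_rpow (by norm_num) (by norm_num)]; norm_num
    have hrw : (1/16:ℝ)^(x-1) * Real.exp (2*x) = 16 * Real.exp ((2 - Real.log 16) * x) := by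
      rw [Real.rpow_def_of_pos (by norm_num : (0:ℝ) < 1/16), ← Real.exp_add, one_div,
        Real.log_inv,
        show -Real.log 16 * (x-1) + 2*x = Real.log 16 + (2 - Real.log 16)*x by ring,
        Real.exp_add, Real.exp_log (by norm_num : (0:ℝ) < 16)]
    calc fA x = 4 * x^2 * (I₁ * I₂) * Real.exp (2*x) := hfx
      _ ≤ 4 * x^2 * (1/16:ℝ)^(x-1) * Real.exp (2*x) := by
          have : (0:ℝ) ≤ 4 * x^2 := by positivity
          nlinarith [Real.exp_pos (2*x), mul_le_mul_of_nonneg_left habs this]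
      _ = 4 * x^2 * ((1/16:ℝ)^(x-1) * Real.exp (2*x)) := by ring
      _ = g x := by rw [hrw, hg_def]; ring
  -- nonnegativity
  have hnn : ∀ x : ℝ, 0 < x → 0 ≤ fA x := by
    intro x hx
    have h1 : 0 < Real.Gamma x := Real.Gamma_pos_of_pos hx
    have h2 : 0 < Real.Gamma (3*x) := Real.Gamma_pos_of_pos (by linarith)
    rw [hfA_def]
    positivity
  -- g tends to 0
  have hlog : 2 - Real.log 16 < 0 := by
    have h1 : Real.exp 2 < 16 := by
      rw [show (2:ℝ) = 1 + 1 by norm_num, Real.exp_add]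
      nlinarith [Real.exp_one_lt_d9, Real.exp_pos 1]
    have := Real.log_lt_log (Real.exp_pos 2) h1
    rw [Real.log_exp] at this
    linarith
  set b : ℝ := Real.log 16 - 2 with hb_def
  have hbpos : 0 < b := by rw [hb_def]; linarith
  have hg0 : Filter.Tendsto g Filter.atTop (nhds 0) := by
    have h1 : Filter.Tendsto (fun x : ℝ => b * x) Filter.atTop Filter.atTop :=
      Filter.Tendsto.const_mul_atTop hbpos Filter.tendsto_id
    have h2 := (Real.tendsto_pow_mul_exp_neg_atTop_nhds_zero 2).comp h1
    have h3 := h2.const_mul (64 / b^2)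
    rw [mul_zero] at h3
    refine h3.congr fun x => ?_
    simp only [Function.comp_apply]
    rw [show -(b*x) = (2 - Real.log 16) * x by rw [hb_def]; ring, hg_def]
    field_simp
  -- squeeze for fA on atTop
  have hfA0 : Filter.Tendsto fA Filter.atTop (nhds 0) := by
    refine tendsto_of_tendsto_of_tendsto_of_le_of_le' tendsto_const_nhds hg0 ?_ ?_
    · filter_upwards [Filter.eventually_ge_atTop (2:ℝ)] with x hx
      exact hnn x (by linarith)
    · filter_upwards [Filter.eventually_ge_atTop (2:ℝ)] with x hx
      exact key x hx
  -- compose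
  have hinv : Filter.Tendsto (fun θ : ℝ => 1/θ) (nhdsWithin 0 (Set.Ioi 0)) Filter.atTop := by
    simpa [one_div] using tendsto_inv_nhdsGT_zero (𝕜 := ℝ)
  have hcomp := hfA0.comp hinv
  refine hcomp.congr' ?_
  filter_upwards [self_mem_nhdsWithin] with θ hθ
  have hθ0 : θ ≠ 0 := ne_of_gt hθ
  simp only [Function.comp_apply, hfA_def, A]
  rw [show 3 * (1/θ) = 3/θ by ring, show 2 * (1/θ) = 2/θ by ring]
  congr 1
  field_simp
end

section
/- For every a > 0, 3 φ'(3a) > φ'(a), where φ'(x) = Σ_{n=1}^∞ 1/(n+x)^2. Equivalently, the trigamma-type function satisfies 3 Σ_{n≥1} 1/(n+3a)^2 > Σ_{n≥1} 1/(n+a)^2. -/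
/-- For every `a > 0`, `3 Σ_{n≥1} 1/(n+3a)² > Σ_{n≥1} 1/(n+a)²`. -/
theorem trigamma_type_inequality (a : ℝ) (ha : 0 < a) :
    (∑' n : ℕ, (1 : ℝ) / ((n + 1 : ℝ) + a) ^ 2) <
      3 * ∑' n : ℕ, (1 : ℝ) / ((n + 1 : ℝ) + 3 * a) ^ 2 := by
  set g : ℕ → ℝ := fun n => (1 : ℝ) / ((n + 1 : ℝ) + 3 * a) ^ 2 with hgdef
  have hbase : Summable (fun n : ℕ => (1 : ℝ) / ((n : ℝ) + 1) ^ 2) := by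
    have h := (summable_nat_add_iff 1).mpr
      (Real.summable_one_div_nat_pow.mpr (le_refl 2))
    convert h using 2 with n
    push_cast
    exacts [rfl, by push_cast; ring]
  have hg : Summable g := by
    apply hbase.of_nonneg_of_le (fun n => by positivity)
    intro n
    apply one_div_le_one_div_of_le (by positivity)
    nlinarith [Nat.cast_nonneg (α := ℝ) n]
  have hf : Summable (fun n : ℕ => (1 : ℝ) / ((n + 1 : ℝ) + a) ^ 2) := by
    apply hbase.of_nonneg_of_le (fun n => by positivity)
    intro n
    apply one_div_le_one_div_of_le (by positivity)
    nlinarith [Nat.cast_nonneg (α := ℝ) n]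
  have he : ∀ p : ℕ × Fin 3, (Nat.divModEquiv 3).symm p = 3 * p.1 + (p.2 : ℕ) := by
    intro p
    simp [Nat.divModEquiv]
    omega
  have hge : Summable (fun p : ℕ × Fin 3 => g ((Nat.divModEquiv 3).symm p)) :=
    hg.comp_injective (Nat.divModEquiv 3).symm.injective
  have hsplit : ∑' n, g n = ∑' n : ℕ, (g (3*n) + g (3*n+1) + g (3*n+2)) := by
    rw [← (Nat.divModEquiv 3).symm.tsum_eq g,
      Summable.tsum_prod' hge (fun b => hge.prod_factor b)]
    congr 1
    ext n
    rw [tsum_fintype, Fin.sum_univ_three]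
    simp only [he]
    norm_num
  have key : ∀ n : ℕ, (1:ℝ)/((n + 1 : ℝ)+a)^2 < 3*(g (3*n) + g (3*n+1) + g (3*n+2)) := by
    intro n
    have hn : (0:ℝ) ≤ (n:ℝ) := Nat.cast_nonneg n
    simp only [hgdef]
    push_cast
    set x : ℝ := (n:ℝ) with hx
    have e1 : (1:ℝ)/(x+1+a)^2 = 9/(3*x+2+1+3*a)^2 := by
      rw [div_eq_div_iff (by positivity) (by positivity)]; ring
    have h1 : (1:ℝ)/(3*x+2+1+3*a)^2 < 1/(3*x+1+3*a)^2 := by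
      apply one_div_lt_one_div_of_lt (by positivity)
      nlinarith
    have h2 : (1:ℝ)/(3*x+2+1+3*a)^2 < 1/(3*x+1+1+3*a)^2 := by
      apply one_div_lt_one_div_of_lt (by positivity)
      nlinarith
    have e2 : (9:ℝ)/(3*x+2+1+3*a)^2 = 9*(1/(3*x+2+1+3*a)^2) := by ring
    rw [e1, e2]
    linarith
  have hsum3 : Summable (fun n : ℕ => 3*(g (3*n) + g (3*n+1) + g (3*n+2))) := by
    apply Summable.mul_left
    have i1 : Summable (fun n : ℕ => g (3*n)) :=
      hg.comp_injective (fun m n h => by omega)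
    have i2 : Summable (fun n : ℕ => g (3*n+1)) :=
      hg.comp_injective (fun m n h => by omega)
    have i3 : Summable (fun n : ℕ => g (3*n+2)) :=
      hg.comp_injective (fun m n h => by omega)
    exact (i1.add i2).add i3
  calc (∑' n : ℕ, (1 : ℝ) / ((n + 1 : ℝ) + a) ^ 2)
      < ∑' n : ℕ, 3*(g (3*n) + g (3*n+1) + g (3*n+2)) :=
        Summable.tsum_lt_tsum (fun n => (key n).le) (key 0) hf hsum3
    _ = 3 * ∑' n, g n := by rw [hsplit, tsum_mul_left]
end

section
/- Let M(r) = (r-1) r^{1/(r-1)} / (e log r) for r > 1 (with M(1) = 1 by continuity). Then M is strictly increasing on (1,∞). -/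
/-- `M(r) = (r-1) r^{1/(r-1)} / (e log r)` for `r ≠ 1`, with `M(1) = 1`. -/
noncomputable def M (r : ℝ) : ℝ :=
  if r = 1 then 1 else (r - 1) * r ^ (1 / (r - 1)) / (Real.exp 1 * Real.log r)

open Real Set

lemma log_gt_aux {r : ℝ} (hr : 1 < r) : (r - 1) / r < Real.log r := by
  have hr0 : (0:ℝ) < r := by linarith
  have h := Real.log_lt_sub_one_of_pos (x := r⁻¹) (by positivity)
    (by intro h; rw [inv_eq_one] at h; linarith)
  rw [Real.log_inv] at h
  have : (r - 1) / r = 1 - r⁻¹ := by field_simp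
  rw [this]; linarith

lemma L_mono : StrictMonoOn (fun r : ℝ => (r - 1) / Real.log r) (Set.Ioi 1) := by
  apply strictMonoOn_of_deriv_pos (convex_Ioi 1)
  · apply ContinuousOn.div
    · fun_prop
    · exact Real.continuousOn_log.mono (fun x hx => by
        simp only [Set.mem_Ioi, Set.mem_compl_iff, Set.mem_singleton_iff] at *; linarith)
    · intro x hx
      exact ne_of_gt (Real.log_pos hx)
  · intro x hx
    rw [interior_Ioi] at hx
    have hx1 : 1 < x := hx
    have hx0 : 0 < x := by linarith
    have hlog : 0 < Real.log x := Real.log_pos hx1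
    have hd : HasDerivAt (fun r : ℝ => (r - 1) / Real.log r)
        ((1 * Real.log x - (x - 1) * x⁻¹) / (Real.log x) ^ 2) x :=
      ((hasDerivAt_id x).sub_const 1).div (Real.hasDerivAt_log (ne_of_gt hx0))
        (ne_of_gt hlog)
    rw [hd.deriv]
    have h1 : (x - 1) * x⁻¹ < Real.log x := by
      rw [← div_eq_mul_inv]; exact log_gt_aux hx1
    apply div_pos (by linarith) (by positivity)

lemma h_mono : StrictMonoOn (fun x : ℝ => Real.log x + 1 / x) (Set.Ici 1) := by
  apply strictMonoOn_of_deriv_pos (convex_Ici 1)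
  · apply ContinuousOn.add
    · exact Real.continuousOn_log.mono (fun x hx => by
        simp only [Set.mem_Ici, Set.mem_compl_iff, Set.mem_singleton_iff] at *; linarith)
    · exact continuousOn_const.div continuousOn_id (fun x hx => by
        simp only [Set.mem_Ici, id] at *; intro h; linarith)
  · intro x hx
    rw [interior_Ici] at hx
    have hx1 : 1 < x := hx
    have hx0 : 0 < x := by linarith
    have hd : HasDerivAt (fun x : ℝ => Real.log x + 1 / x) (x⁻¹ + -(x ^ 2)⁻¹) x := by
      have h1 : HasDerivAt (fun x : ℝ => x⁻¹) (-(x ^ 2)⁻¹) x := hasDerivAt_inv (ne_of_gt hx0)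
      have := (Real.hasDerivAt_log (ne_of_gt hx0)).add h1
      simp only [one_div]
      exact this
    rw [hd.deriv]
    have h2 : (x ^ 2)⁻¹ < x⁻¹ := by
      apply inv_strictAnti₀ hx0
      nlinarith
    linarith

lemma L_gt_one {r : ℝ} (hr : 1 < r) : 1 < (r - 1) / Real.log r := by
  have hlog : 0 < Real.log r := Real.log_pos hr
  rw [lt_div_iff₀ hlog, one_mul]
  exact Real.log_lt_sub_one_of_pos (by linarith) (ne_of_gt hr)

lemma M_eq {r : ℝ} (hr : 1 < r) :
    M r = Real.exp (Real.log ((r - 1) / Real.log r) + 1 / ((r - 1) / Real.log r) - 1) := by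
  have hr0 : 0 < r := by linarith
  have hlog : 0 < Real.log r := Real.log_pos hr
  have hr1 : 0 < r - 1 := by linarith
  rw [M, if_neg (ne_of_gt hr), Real.exp_sub, Real.exp_add,
    Real.exp_log (by positivity), Real.rpow_def_of_pos hr0, one_div_div]
  rw [mul_one_div]
  field_simp

/-- `M` is strictly increasing on `(1,∞)`. -/
theorem M_strictMono : StrictMonoOn M (Set.Ioi 1) := by
  intro a ha b hb hab
  have ha1 : 1 < a := ha
  have hb1 : 1 < b := hb
  rw [M_eq ha1, M_eq hb1, Real.exp_lt_exp]
  have hLa : (a - 1) / Real.log a ∈ Set.Ici (1:ℝ) := le_of_lt (L_gt_one ha1)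
  have hLb : (b - 1) / Real.log b ∈ Set.Ici (1:ℝ) := le_of_lt (L_gt_one hb1)
  have hL : (a - 1) / Real.log a < (b - 1) / Real.log b := L_mono ha hb hab
  have := h_mono hLa hLb hL
  simp only at this
  linarith
end

section
/- Reverse power-mean (Specht) inequality: let σ₁², …, σₙ² > 0 with max_{i,j} σᵢ²/σⱼ² = r, and let α₁,…,αₙ > 0 with Σ αᵢ = 1. Then Σᵢ αᵢ σᵢ² ≤ M(r) · Πᵢ (σᵢ²)^{αᵢ}, where M(r) = (r-1) r^{1/(r-1)}/(e log r) for r > 1 and M(1) = 1. -/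
/-- Chord inequality for `log` on `[1, r]`. -/
lemma log_chord {r y : ℝ} (hr : 1 < r) (h1 : 1 ≤ y) (h2 : y ≤ r) :
    (y - 1) * Real.log r / (r - 1) ≤ Real.log y := by
  have hr0 : (0:ℝ) < r - 1 := by linarith
  have key := strictConcaveOn_log_Ioi.concaveOn.2 (Set.mem_Ioi.mpr one_pos)
    (Set.mem_Ioi.mpr (by linarith : (0:ℝ) < r))
    (div_nonneg (by linarith) (by linarith) : (0:ℝ) ≤ (r - y)/(r-1))
    (div_nonneg (by linarith) (by linarith) : (0:ℝ) ≤ (y - 1)/(r-1))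
    (by field_simp; ring)
  have hy : (r-y)/(r-1) + (y-1)/(r-1) * r = y := by field_simp; ring
  simp only [smul_eq_mul, Real.log_one, mul_zero, zero_add, hy, mul_one] at key
  calc (y - 1) * Real.log r / (r - 1) = (y-1)/(r-1) * Real.log r := by ring
    _ ≤ Real.log y := key

/-- Reverse power-mean (Specht) inequality: if the ratios `σᵢ²/σⱼ²` are at most `r`,
with the maximum ratio equal to `r`, then the `α`-weighted arithmetic mean is at most
`M(r)` times the `α`-weighted geometric mean. -/
theorem reverse_power_mean (n : ℕ) (hn : 0 < n) (σ2 α : Fin n → ℝ) (r : ℝ)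
    (hσ : ∀ i, 0 < σ2 i) (hα : ∀ i, 0 < α i) (hsum : ∑ i, α i = 1)
    (hr : ∀ i j, σ2 i / σ2 j ≤ r) (hr' : ∃ i j, σ2 i / σ2 j = r) :
    ∑ i, α i * σ2 i ≤ M r * ∏ i, σ2 i ^ α i := by
  have : Nonempty (Fin n) := ⟨⟨0, hn⟩⟩
  obtain ⟨i₀, hi₀⟩ := Finite.exists_min σ2
  set m := σ2 i₀ with hm_def
  have hm : 0 < m := hσ i₀
  have hr1 : 1 ≤ r := by
    have := hr i₀ i₀
    rwa [div_self hm.ne'] at this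
  have hup : ∀ i, σ2 i ≤ r * m := fun i => (div_le_iff₀ hm).mp (hr i i₀)
  -- geometric mean as exponential
  have hGM : ∏ i, σ2 i ^ α i = Real.exp (∑ i, α i * Real.log (σ2 i)) := by
    rw [Real.exp_sum]
    exact Finset.prod_congr rfl fun i _ => by rw [Real.rpow_def_of_pos (hσ i), mul_comm]
  rcases eq_or_lt_of_le hr1 with heq | hlt
  · -- r = 1 : all σ2 equal
    have hall : ∀ i, σ2 i = m := fun i =>
      le_antisymm (by have := hup i; rw [← heq] at this; linarith) (hi₀ i)
    have h1 : ∑ i, α i * σ2 i = m := by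
      simp only [hall]
      rw [← Finset.sum_mul, hsum, one_mul]
    have h2 : ∏ i, σ2 i ^ α i = m := by
      rw [hGM]
      have : ∑ i, α i * Real.log (σ2 i) = Real.log m := by
        simp only [hall]
        rw [← Finset.sum_mul, hsum, one_mul]
      rw [this, Real.exp_log hm]
    rw [M, if_pos heq.symm, h1, h2, one_mul]
  · -- r > 1
    have hrm1 : (0:ℝ) < r - 1 := by linarith
    have hlogr : 0 < Real.log r := Real.log_pos hlt
    set s : ℝ := Real.log r / (r - 1) with hs_def
    have hs : 0 < s := div_pos hlogr hrm1
    set A : ℝ := ∑ i, α i * σ2 i with hA_def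
    have hA : 0 < A :=
      Finset.sum_pos (fun i _ => mul_pos (hα i) (hσ i)) Finset.univ_nonempty
    -- per-term chord bound
    have hterm : ∀ i, Real.log m + (σ2 i / m - 1) * s ≤ Real.log (σ2 i) := by
      intro i
      have hy1 : 1 ≤ σ2 i / m := (one_le_div hm).mpr (hi₀ i)
      have hy2 : σ2 i / m ≤ r := by
        rw [div_le_iff₀ hm]; exact hup i
      have := log_chord hlt hy1 hy2
      have hlogdiv : Real.log (σ2 i / m) = Real.log (σ2 i) - Real.log m :=
        Real.log_div (hσ i).ne' hm.ne'
      rw [hlogdiv] at this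
      have : (σ2 i / m - 1) * s ≤ Real.log (σ2 i) - Real.log m := by
        calc (σ2 i / m - 1) * s = (σ2 i / m - 1) * Real.log r / (r - 1) := by
              rw [hs_def]; ring
          _ ≤ _ := this
      linarith
    -- sum the bounds
    have hsumlog : Real.log m + (A / m - 1) * s ≤ ∑ i, α i * Real.log (σ2 i) := by
      have h := Finset.sum_le_sum (fun i (_ : i ∈ Finset.univ) =>
        mul_le_mul_of_nonneg_left (hterm i) (hα i).le)
      have hlhs : ∑ i, α i * (Real.log m + (σ2 i / m - 1) * s)
          = Real.log m + (A / m - 1) * s := by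
        have : ∀ i, α i * (Real.log m + (σ2 i / m - 1) * s)
            = α i * (Real.log m - s) + (α i * σ2 i) * (s / m) := by
          intro i; field_simp; ring
        rw [Finset.sum_congr rfl fun i _ => this i, Finset.sum_add_distrib,
          ← Finset.sum_mul, ← Finset.sum_mul, hsum, one_mul, ← hA_def]
        field_simp
        ring
      rwa [hlhs] at h
    have hGMge : m * Real.exp ((A / m - 1) * s) ≤ ∏ i, σ2 i ^ α i := by
      rw [hGM]
      calc m * Real.exp ((A / m - 1) * s)
          = Real.exp (Real.log m + (A / m - 1) * s) := by
            rw [Real.exp_add, Real.exp_log hm]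
        _ ≤ Real.exp (∑ i, α i * Real.log (σ2 i)) := Real.exp_le_exp.mpr hsumlog
    -- M r = exp (s - 1) / s
    have hMr : M r = Real.exp (s - 1) / s := by
      rw [M, if_neg (by linarith : r ≠ 1)]
      rw [Real.rpow_def_of_pos (by linarith : (0:ℝ) < r)]
      rw [Real.exp_sub]
      have : Real.log r * (1 / (r - 1)) = s := by rw [hs_def]; ring
      rw [this]
      field_simp [hs_def]
      rw [hs_def]; field_simp
    have hM0 : 0 < M r := by
      rw [hMr]; positivity
    -- key scalar inequality : A ≤ M r * (m * exp ((A/m - 1) * s))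
    have hkey : A ≤ M r * (m * Real.exp ((A / m - 1) * s)) := by
      rw [hMr]
      have hu : (A / m) * s ≤ Real.exp ((A / m) * s - 1) := by
        have := Real.add_one_le_exp ((A / m) * s - 1)
        linarith
      have hexp : Real.exp (s - 1) * Real.exp ((A / m - 1) * s)
          = Real.exp ((A / m) * s - 1) := by
        rw [← Real.exp_add]; ring_nf
      calc A = ((A / m) * s) * (m / s) := by field_simp
        _ ≤ Real.exp ((A / m) * s - 1) * (m / s) := by
            apply mul_le_mul_of_nonneg_right hu
            positivity
        _ = Real.exp (s - 1) / s * (m * Real.exp ((A / m - 1) * s)) := by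
            rw [← hexp]; field_simp
    calc A ≤ M r * (m * Real.exp ((A / m - 1) * s)) := hkey
      _ ≤ M r * ∏ i, σ2 i ^ α i := by
          apply mul_le_mul_of_nonneg_left hGMge hM0.le
end

section
/- Let p = Σ_{i=1}^n αᵢ pᵢ be a symmetric unimodal mixture where pᵢ(x) = (1/Zᵢ) e^{-βᵢ|x-m|^{θᵢ}} with θᵢ, βᵢ > 0, αᵢ > 0, Σαᵢ = 1, and let σᵢ² = Var(pᵢ) with r = max_{i,j} σᵢ²/σⱼ². Then Var(p) ≤ M(r) · Πᵢ (1/A(θᵢ))^{αᵢ} · e^{2h(p)}. -/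
open Real MeasureTheory Set

section Helpers

lemma sqrt_add_le' {a b : ℝ} (ha : 0 ≤ a) (hb : 0 ≤ b) :
    Real.sqrt (a + b) ≤ Real.sqrt a + Real.sqrt b := by
  have h : a + b ≤ (Real.sqrt a + Real.sqrt b) ^ 2 := by
    have h1 := Real.sq_sqrt ha
    have h2 := Real.sq_sqrt hb
    nlinarith [Real.sqrt_nonneg a, Real.sqrt_nonneg b]
  calc Real.sqrt (a + b) ≤ Real.sqrt ((Real.sqrt a + Real.sqrt b) ^ 2) := Real.sqrt_le_sqrt h
  _ = Real.sqrt a + Real.sqrt b := Real.sqrt_sq (by positivity)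

lemma sqrt_sum_le' {ι : Type*} (s : Finset ι) (f : ι → ℝ) (hf : ∀ i ∈ s, 0 ≤ f i) :
    Real.sqrt (∑ i ∈ s, f i) ≤ ∑ i ∈ s, Real.sqrt (f i) := by
  induction s using Finset.cons_induction with
  | empty => simp
  | cons a s ha ih =>
    rw [Finset.sum_cons, Finset.sum_cons]
    have h1 : 0 ≤ f a := hf a (Finset.mem_cons_self a s)
    have h2 : ∀ i ∈ s, 0 ≤ f i := fun i hi => hf i (Finset.mem_cons_of_mem hi)
    calc Real.sqrt (f a + ∑ i ∈ s, f i)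
        ≤ Real.sqrt (f a) + Real.sqrt (∑ i ∈ s, f i) :=
          sqrt_add_le' h1 (Finset.sum_nonneg h2)
      _ ≤ Real.sqrt (f a) + ∑ i ∈ s, Real.sqrt (f i) := by linarith [ih h2]

lemma abs_negMulLog_le' {u C : ℝ} (hu : 0 ≤ u) (huC : u ≤ C) :
    |Real.negMulLog u| ≤ (2 + Real.sqrt (C + 1) * Real.log (C + 1)) * Real.sqrt u := by
  have hC : 0 ≤ C := le_trans hu huC
  have hK : (0:ℝ) ≤ Real.sqrt (C + 1) * Real.log (C + 1) :=
    mul_nonneg (Real.sqrt_nonneg _) (Real.log_nonneg (by linarith))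
  rcases eq_or_lt_of_le hu with h0 | h0
  · simp [← h0, Real.negMulLog]
  rcases le_or_gt u 1 with h1u | h1u
  · have hlog : Real.log u ≤ 0 := Real.log_nonpos h0.le h1u
    have habs : |Real.negMulLog u| = u * (-Real.log u) := by
      rw [Real.negMulLog, abs_of_nonneg (by nlinarith)]; ring
    have hs : 0 < Real.sqrt u := Real.sqrt_pos.mpr h0
    have hinv : -Real.log u = 2 * Real.log (Real.sqrt u)⁻¹ := by
      rw [Real.log_inv, Real.log_sqrt hu]; ring
    have hle : Real.log (Real.sqrt u)⁻¹ ≤ (Real.sqrt u)⁻¹ - 1 :=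
      Real.log_le_sub_one_of_pos (by positivity)
    have hle2 : -Real.log u ≤ 2 / Real.sqrt u := by
      rw [hinv]
      have : (Real.sqrt u)⁻¹ - 1 ≤ (Real.sqrt u)⁻¹ := by linarith
      calc 2 * Real.log (Real.sqrt u)⁻¹ ≤ 2 * (Real.sqrt u)⁻¹ := by linarith
        _ = 2 / Real.sqrt u := by rw [div_eq_mul_inv]
    calc |Real.negMulLog u| = u * (-Real.log u) := habs
      _ ≤ u * (2 / Real.sqrt u) := by
          apply mul_le_mul_of_nonneg_left hle2 hu
      _ = 2 * (u / Real.sqrt u) := by ring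
      _ = 2 * Real.sqrt u := by rw [Real.div_sqrt]
      _ ≤ (2 + Real.sqrt (C + 1) * Real.log (C + 1)) * Real.sqrt u := by
          apply mul_le_mul_of_nonneg_right (by linarith) (Real.sqrt_nonneg u)
  · have hlog : 0 ≤ Real.log u := Real.log_nonneg h1u.le
    have habs : |Real.negMulLog u| = u * Real.log u := by
      rw [Real.negMulLog, abs_of_nonpos (by nlinarith)]; ring
    have hss : Real.sqrt u * Real.sqrt u = u := Real.mul_self_sqrt hu
    have h1 : Real.sqrt u ≤ Real.sqrt (C + 1) := Real.sqrt_le_sqrt (by linarith)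
    have h2 : Real.log u ≤ Real.log (C + 1) := Real.log_le_log h0 (by linarith)
    calc |Real.negMulLog u| = Real.sqrt u * (Real.sqrt u * Real.log u) := by
          rw [habs, ← mul_assoc, hss]
      _ ≤ Real.sqrt u * (Real.sqrt (C + 1) * Real.log (C + 1)) := by
          apply mul_le_mul_of_nonneg_left _ (Real.sqrt_nonneg u)
          have := Real.sqrt_nonneg u
          nlinarith
      _ ≤ (2 + Real.sqrt (C + 1) * Real.log (C + 1)) * Real.sqrt u := by
          nlinarith [Real.sqrt_nonneg u]

lemma integrableOn_rpow_mul_exp_neg_mul_rpow_pos {p s b : ℝ} (hs : -1 < s) (hp : 0 < p)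
    (hb : 0 < b) : IntegrableOn (fun x : ℝ => x ^ s * Real.exp (-b * x ^ p)) (Ioi 0) := by
  set q : ℝ := (s + 1) / p - 1 with hq_def
  have hq : -1 < q := by
    have : 0 < (s + 1) / p := div_pos (by linarith) hp
    simp only [hq_def]; linarith
  have base : IntegrableOn (fun y : ℝ => y ^ q * Real.exp (-b * y)) (Ioi 0) := by
    have h1 := integrableOn_rpow_mul_exp_neg_mul_rpow hq one_pos hb
    refine h1.congr_fun (fun x hx => ?_) measurableSet_Ioi
    simp only [Real.rpow_one]
  have h2 := (integrableOn_Ioi_comp_rpow_iff'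
    (fun y : ℝ => y ^ q * Real.exp (-b * y)) hp.ne').mpr base
  refine h2.congr_fun (fun x hx => ?_) measurableSet_Ioi
  have hx0 : (0:ℝ) < x := hx
  simp only [smul_eq_mul]
  rw [← Real.rpow_mul hx0.le]
  rw [show p * q = s + 1 - p by rw [hq_def, mul_sub, mul_div_assoc', mul_comm p (s + 1), mul_div_assoc, div_self hp.ne']; ring]
  rw [← mul_assoc, ← Real.rpow_add hx0]
  ring_nf

lemma integrable_comp_abs' {f : ℝ → ℝ} (hf : IntegrableOn f (Ioi 0)) :
    Integrable (fun x : ℝ => f |x|) := by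
  have int_Ioi : IntegrableOn (fun x : ℝ => f |x|) (Ioi 0) :=
    hf.congr_fun (fun x hx => by rw [abs_of_pos hx]) measurableSet_Ioi
  have int_Iic : IntegrableOn (fun x : ℝ => f |x|) (Iic 0) := by
    rw [← Measure.map_neg_eq_self (volume : Measure ℝ)]
    have m : MeasurableEmbedding fun x : ℝ => -x := (Homeomorph.neg ℝ).measurableEmbedding
    rw [m.integrableOn_map_iff]
    simp_rw [Function.comp_def, abs_neg, neg_preimage, neg_Iic, neg_zero]
    exact Iff.mpr integrableOn_Ici_iff_integrableOn_Ioi int_Ioi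
  have h : IntegrableOn (fun x : ℝ => f |x|) (Iic 0 ∪ Ioi 0) := int_Iic.union int_Ioi
  rwa [Iic_union_Ioi, integrableOn_univ] at h

lemma integrable_centered {s t b : ℝ} (m : ℝ) (hs : -1 < s) (ht : 0 < t) (hb : 0 < b) :
    Integrable (fun x : ℝ => |x - m| ^ s * Real.exp (-b * |x - m| ^ t)) := by
  have h0 : Integrable (fun x : ℝ => |x| ^ s * Real.exp (-b * |x| ^ t)) :=
    integrable_comp_abs' (f := fun y : ℝ => y ^ s * Real.exp (-b * y ^ t))
      (integrableOn_rpow_mul_exp_neg_mul_rpow_pos hs ht hb)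
  exact h0.comp_sub_right m

lemma integral_centered {s t b : ℝ} (m : ℝ) (hs : -1 < s) (ht : 0 < t) (hb : 0 < b) :
    ∫ x : ℝ, |x - m| ^ s * Real.exp (-b * |x - m| ^ t)
      = 2 * (b ^ (-(s + 1) / t) * (1 / t) * Real.Gamma ((s + 1) / t)) := by
  have h1 : ∫ x : ℝ, |x - m| ^ s * Real.exp (-b * |x - m| ^ t)
      = ∫ x : ℝ, |x| ^ s * Real.exp (-b * |x| ^ t) :=
    integral_sub_right_eq_self (fun y : ℝ => |y| ^ s * Real.exp (-b * |y| ^ t)) m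
  rw [h1, integral_comp_abs (f := fun y : ℝ => y ^ s * Real.exp (-b * y ^ t)),
    integral_rpow_mul_exp_neg_mul_rpow ht hs hb]

lemma M_eq_of_one_lt {r : ℝ} (hr : 1 < r) :
    M r = ((r - 1) / Real.log r) * Real.exp (1 / ((r - 1) / Real.log r) - 1) := by
  have hr0 : 0 < r := by linarith
  have hlr : 0 < Real.log r := Real.log_pos hr
  have hr1 : r - 1 ≠ 0 := by linarith
  rw [M, if_neg (by linarith : r ≠ 1)]
  rw [Real.rpow_def_of_pos hr0]
  rw [one_div_div, Real.exp_sub]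
  rw [show Real.log r / (r - 1) = Real.log r * (1 / (r - 1)) by ring]
  field_simp

lemma M_nonneg {r : ℝ} (hr : 1 ≤ r) : 0 ≤ M r := by
  rcases eq_or_lt_of_le hr with h | h
  · rw [M, if_pos h.symm]; norm_num
  · rw [M_eq_of_one_lt h]
    have hlr : 0 < Real.log r := Real.log_pos h
    exact mul_nonneg (div_nonneg (by linarith) hlr.le) (Real.exp_pos _).le

lemma chord_exp {r u : ℝ} (hr : 1 < r) (hu0 : 0 ≤ u) (hu1 : u ≤ Real.log r) :
    Real.exp u ≤ 1 + ((r - 1) / Real.log r) * u := by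
  have hlr : 0 < Real.log r := Real.log_pos hr
  set t : ℝ := u / Real.log r with ht_def
  have ht0 : 0 ≤ t := div_nonneg hu0 hlr.le
  have ht1 : t ≤ 1 := (div_le_one hlr).mpr hu1
  have key := convexOn_exp.2 (mem_univ (0:ℝ)) (mem_univ (Real.log r))
    (by linarith : (0:ℝ) ≤ 1 - t) ht0 (by ring)
  simp only [smul_eq_mul, mul_zero, zero_add] at key
  rw [div_mul_cancel₀ u hlr.ne'] at key
  rw [Real.exp_zero, Real.exp_log (by linarith : (0:ℝ) < r)] at key
  calc Real.exp u ≤ (1 - t) * 1 + t * r := key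
    _ = 1 + ((r - 1) / Real.log r) * u := by
        rw [ht_def]; field_simp; ring

lemma specht {n : ℕ} (hn : 0 < n) (α a : Fin n → ℝ) (r : ℝ)
    (hα : ∀ i, 0 < α i) (hsum : ∑ i, α i = 1) (ha : ∀ i, 0 < a i)
    (hr : ∀ i j, a i / a j ≤ r) :
    ∑ i, α i * a i ≤ M r * Real.exp (∑ i, α i * Real.log (a i)) := by
  have i₀ : Fin n := ⟨0, hn⟩
  have hr1 : 1 ≤ r := by
    have := hr i₀ i₀
    rwa [div_self (ha i₀).ne'] at this
  rcases eq_or_lt_of_le hr1 with hre | hre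
  · have heq : ∀ i, a i = a i₀ := by
      intro i
      have h1 := hr i i₀; have h2 := hr i₀ i
      rw [← hre] at h1 h2
      exact le_antisymm ((div_le_one (ha i₀)).mp h1) ((div_le_one (ha i)).mp h2)
    have h1 : ∑ i, α i * a i = a i₀ := by
      simp_rw [heq, ← Finset.sum_mul, hsum, one_mul]
    have h2 : ∑ i, α i * Real.log (a i) = Real.log (a i₀) := by
      simp_rw [heq, ← Finset.sum_mul, hsum, one_mul]
    rw [h1, h2, M, if_pos hre.symm, one_mul, Real.exp_log (ha i₀)]
  · obtain ⟨im, -, hmin⟩ := Finset.exists_min_image Finset.univ a ⟨i₀, Finset.mem_univ _⟩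
    set s : ℝ := a im with hs_def
    have hs : 0 < s := ha im
    have hlr : 0 < Real.log r := Real.log_pos hre
    set c : ℝ := (r - 1) / Real.log r with hc_def
    have hc : 0 < c := div_pos (by linarith) hlr
    set Y : ℝ := ∑ i, α i * Real.log (a i) with hY_def
    have key1 : ∀ i, a i ≤ s * (1 + c * (Real.log (a i) - Real.log s)) := by
      intro i
      set u : ℝ := Real.log (a i) - Real.log s with hu_def
      have hu0 : 0 ≤ u := by
        have := Real.log_le_log hs (hmin i (Finset.mem_univ i))
        simp only [hu_def]; linarith
      have hu1 : u ≤ Real.log r := by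
        have h1 : a i ≤ r * s := by
          have := hr i im
          exact (div_le_iff₀ hs).mp this
        have h2 : Real.log (a i) ≤ Real.log r + Real.log s := by
          calc Real.log (a i) ≤ Real.log (r * s) := Real.log_le_log (ha i) h1
            _ = Real.log r + Real.log s := Real.log_mul (by linarith) hs.ne'
        simp only [hu_def]; linarith
      have hchord := chord_exp hre hu0 hu1
      have hai : a i = s * Real.exp u := by
        rw [hu_def, Real.exp_sub, Real.exp_log (ha i), Real.exp_log hs]
        field_simp
      rw [hai]
      exact mul_le_mul_of_nonneg_left hchord hs.le
    have key2 : ∑ i, α i * a i ≤ s * (1 + c * (Y - Real.log s)) := by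
      calc ∑ i, α i * a i
          ≤ ∑ i, α i * (s * (1 + c * (Real.log (a i) - Real.log s))) := by
            apply Finset.sum_le_sum
            intro i _
            exact mul_le_mul_of_nonneg_left (key1 i) (hα i).le
        _ = ∑ i, (α i * (s * (1 - c * Real.log s)) + (s * c) * (α i * Real.log (a i))) := by
            apply Finset.sum_congr rfl; intro i _; ring
        _ = s * (1 - c * Real.log s) + (s * c) * Y := by
            rw [Finset.sum_add_distrib, ← Finset.sum_mul, hsum, one_mul, ← Finset.mul_sum,
              hY_def]
        _ = s * (1 + c * (Y - Real.log s)) := by ring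
    have key3 : s * (1 + c * (Y - Real.log s)) ≤ M r * Real.exp Y := by
      set v : ℝ := Y - Real.log s with hv_def
      have hM : M r = c * Real.exp (1 / c - 1) := M_eq_of_one_lt hre
      have hstep : 1 + c * v ≤ c * Real.exp (v + 1 / c - 1) := by
        have h1 := Real.add_one_le_exp (v + 1 / c - 1)
        have h2 : c * (v + 1 / c - 1 + 1) ≤ c * Real.exp (v + 1 / c - 1) :=
          mul_le_mul_of_nonneg_left h1 hc.le
        calc 1 + c * v = c * (v + 1 / c - 1 + 1) := by field_simp; ring
          _ ≤ c * Real.exp (v + 1 / c - 1) := h2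
      have hexpY : Real.exp Y = s * Real.exp v := by
        rw [hv_def, Real.exp_sub, Real.exp_log hs]
        field_simp
      calc s * (1 + c * v) ≤ s * (c * Real.exp (v + 1 / c - 1)) :=
            mul_le_mul_of_nonneg_left hstep hs.le
        _ = c * Real.exp (1 / c - 1) * (s * Real.exp v) := by
            rw [show v + 1 / c - 1 = v + (1 / c - 1) by ring, Real.exp_add]; ring
        _ = M r * Real.exp Y := by rw [hM, hexpY]
    exact key2.trans key3

lemma abs_rpow_two (y : ℝ) : |y| ^ (2:ℝ) = y ^ 2 := by
  rw [show (2:ℝ) = ((2:ℕ):ℝ) by norm_num, Real.rpow_natCast, sq_abs]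

lemma sqrt_exp' (w : ℝ) : Real.sqrt (Real.exp w) = Real.exp (w / 2) := by
  have h : Real.exp w = (Real.exp (w / 2)) ^ 2 := by
    rw [sq, ← Real.exp_add]; ring_nf
  rw [h, Real.sqrt_sq (Real.exp_pos _).le]

end Helpers

/-- Upper bound on the variance of a symmetric unimodal mixture of generalized
Gaussian densities in terms of the entropy power:
`Var(p) ≤ M(r) · Πᵢ (1/A(θᵢ))^{αᵢ} · e^{2h(p)}`. -/
theorem mixture_variance_upper_bound (n : ℕ) (hn : 0 < n) (m : ℝ)
    (θ β α : Fin n → ℝ) (r : ℝ)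
    (hθ : ∀ i, 0 < θ i) (hβ : ∀ i, 0 < β i) (hα : ∀ i, 0 < α i)
    (hsum : ∑ i, α i = 1)
    (p : ℝ → ℝ)
    (hp : ∀ x, p x = ∑ i, α i *
      ((2 * β i ^ (-(1 / θ i)) * (θ i)⁻¹ * Real.Gamma (1 / θ i))⁻¹ *
        Real.exp (-β i * |x - m| ^ θ i)))
    (σ2 : Fin n → ℝ)
    (hσ2 : ∀ i, σ2 i = β i ^ (-(2 / θ i)) * Real.Gamma (3 / θ i) / Real.Gamma (1 / θ i))
    (hr : ∀ i j, σ2 i / σ2 j ≤ r) (hr' : ∃ i j, σ2 i / σ2 j = r) :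
    ∫ x : ℝ, (x - m) ^ 2 * p x ≤
      M r * (∏ i, (1 / A (θ i)) ^ α i) *
        Real.exp (2 * (-∫ x : ℝ, p x * Real.log (p x))) := by
  set Z : Fin n → ℝ := fun i => 2 * β i ^ (-(1 / θ i)) * (θ i)⁻¹ * Real.Gamma (1 / θ i)
    with hZ_def
  have hZ_eq : ∀ i, Z i = 2 * β i ^ (-(1 / θ i)) * (θ i)⁻¹ * Real.Gamma (1 / θ i) :=
    fun i => by rw [hZ_def]
  set g : Fin n → ℝ → ℝ := fun i x => (Z i)⁻¹ * Real.exp (-β i * |x - m| ^ θ i) with hg_def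
  have hg_eq : ∀ i x, g i x = (Z i)⁻¹ * Real.exp (-β i * |x - m| ^ θ i) :=
    fun i x => by rw [hg_def]
  have hΓ1 : ∀ i, 0 < Real.Gamma (1 / θ i) := fun i =>
    Real.Gamma_pos_of_pos (by have := hθ i; positivity)
  have hΓ3 : ∀ i, 0 < Real.Gamma (3 / θ i) := fun i =>
    Real.Gamma_pos_of_pos (by have := hθ i; positivity)
  have hZpos : ∀ i, 0 < Z i := by
    intro i
    have h1 : 0 < β i ^ (-(1 / θ i)) := Real.rpow_pos_of_pos (hβ i) _
    have := hθ i; have := hΓ1 i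
    rw [hZ_eq i]
    positivity
  have hp' : ∀ x, p x = ∑ i, α i * g i x := by
    intro x
    rw [hp x]
  have hgpos : ∀ i x, 0 < g i x := fun i x => by
    rw [hg_eq]
    exact mul_pos (inv_pos.mpr (hZpos i)) (Real.exp_pos _)
  have hint : ∀ (i : Fin n) (s : ℝ), -1 < s →
      Integrable (fun x : ℝ => |x - m| ^ s * Real.exp (-β i * |x - m| ^ θ i)) :=
    fun i s hs => integrable_centered m hs (hθ i) (hβ i)
  have hgint : ∀ i, Integrable (g i) := by
    intro i
    have h := (hint i 0 (by norm_num)).const_mul (Z i)⁻¹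
    refine h.congr (Filter.Eventually.of_forall fun x => ?_)
    simp only [Real.rpow_zero, one_mul, hg_eq]
  have hF1 : ∀ i, ∫ x : ℝ, g i x = 1 := by
    intro i
    have e : ∀ x : ℝ, g i x
        = (Z i)⁻¹ * (|x - m| ^ (0:ℝ) * Real.exp (-β i * |x - m| ^ θ i)) := fun x => by
      rw [Real.rpow_zero, one_mul, hg_eq]
    simp only [e]
    rw [integral_const_mul, integral_centered m (by norm_num) (hθ i) (hβ i), hZ_eq i]
    rw [show (-((0:ℝ) + 1)) / θ i = -(1 / θ i) by ring,
      show ((0:ℝ) + 1) / θ i = 1 / θ i by ring]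
    have hθi := hθ i; have hβi := hβ i; have hΓi := hΓ1 i
    rw [inv_mul_eq_iff_eq_mul₀ (by positivity)]
    ring
  have hx2gint : ∀ i, Integrable (fun x : ℝ => (x - m) ^ 2 * g i x) := by
    intro i
    have h := (hint i 2 (by norm_num)).const_mul (Z i)⁻¹
    refine h.congr (Filter.Eventually.of_forall fun x => ?_)
    simp only [abs_rpow_two, hg_eq]
    ring
  have hF2 : ∀ i, ∫ x : ℝ, (x - m) ^ 2 * g i x = σ2 i := by
    intro i
    have e : ∀ x : ℝ, (x - m) ^ 2 * g i x
        = (Z i)⁻¹ * (|x - m| ^ (2:ℝ) * Real.exp (-β i * |x - m| ^ θ i)) := fun x => by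
      rw [abs_rpow_two, hg_eq]; ring
    simp only [e]
    rw [integral_const_mul, integral_centered m (by norm_num) (hθ i) (hβ i), hσ2 i, hZ_eq i]
    have hb3 : β i ^ (-((2:ℝ) + 1) / θ i) = β i ^ (-(2 / θ i)) * β i ^ (-(1 / θ i)) := by
      rw [← Real.rpow_add (hβ i)]; congr 1; ring
    rw [hb3, show ((2:ℝ) + 1) / θ i = 3 / θ i by norm_num]
    have hθi := hθ i; have hβi := hβ i; have hΓi := hΓ1 i; have hΓ3i := hΓ3 i
    rw [inv_mul_eq_iff_eq_mul₀ (by positivity)]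
    field_simp
  have hwint : ∀ i, Integrable (fun x : ℝ => β i * |x - m| ^ θ i * g i x) := by
    intro i
    have h := (hint i (θ i) (by linarith [hθ i])).const_mul ((Z i)⁻¹ * β i)
    refine h.congr (Filter.Eventually.of_forall fun x => ?_)
    simp only [hg_eq]
    ring
  have hF3 : ∀ i, ∫ x : ℝ, β i * |x - m| ^ θ i * g i x = 1 / θ i := by
    intro i
    have e : ∀ x : ℝ, β i * |x - m| ^ θ i * g i x
        = ((Z i)⁻¹ * β i) * (|x - m| ^ θ i * Real.exp (-β i * |x - m| ^ θ i)) := fun x => by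
      rw [hg_eq]; ring
    simp only [e]
    rw [integral_const_mul, integral_centered m (by linarith [hθ i]) (hθ i) (hβ i)]
    have hΓadd : Real.Gamma ((θ i + 1) / θ i) = (1 / θ i) * Real.Gamma (1 / θ i) := by
      rw [show (θ i + 1) / θ i = 1 / θ i + 1 by
          rw [add_div, div_self (hθ i).ne', add_comm],
        Real.Gamma_add_one (by have := hθ i; positivity)]
    have hbθ : β i ^ (-(θ i + 1) / θ i) = (β i)⁻¹ * β i ^ (-(1 / θ i)) := by
      rw [show -(θ i + 1) / θ i = -1 + -(1 / θ i) by
          rw [neg_div, add_div, div_self (hθ i).ne']; ring,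
        Real.rpow_add (hβ i), Real.rpow_neg_one]
    rw [hΓadd, hbθ, hZ_eq i]
    have hθi := hθ i; have hβi := hβ i; have hΓi := hΓ1 i
    rw [mul_comm, mul_comm ((2 * β i ^ (-(1 / θ i)) * (θ i)⁻¹ * Real.Gamma (1 / θ i))⁻¹) (β i),
      ← mul_assoc, mul_inv_eq_iff_eq_mul₀ (by positivity)]
    field_simp
  have hnml_eq : ∀ (i : Fin n) (x : ℝ), Real.negMulLog (g i x)
      = Real.log (Z i) * g i x + β i * |x - m| ^ θ i * g i x := by
    intro i x
    rw [hg_eq, Real.negMulLog,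
      Real.log_mul (inv_ne_zero (hZpos i).ne') (Real.exp_ne_zero _), Real.log_inv,
      Real.log_exp]
    ring
  have hnmlint : ∀ i, Integrable (fun x : ℝ => Real.negMulLog (g i x)) := by
    intro i
    have h := ((hgint i).const_mul (Real.log (Z i))).add (hwint i)
    refine h.congr (Filter.Eventually.of_forall fun x => ?_)
    simp only [Pi.add_apply]
    exact (hnml_eq i x).symm
  have hF4 : ∀ i, ∫ x : ℝ, Real.negMulLog (g i x) = Real.log (Z i) + 1 / θ i := by
    intro i
    simp only [hnml_eq]
    rw [integral_add ((hgint i).const_mul _) (hwint i), integral_const_mul, hF1 i, hF3 i,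
      mul_one]
  -- nonnegativity and upper bound for p
  have hp_nonneg : ∀ x, 0 ≤ p x := by
    intro x
    rw [hp' x]
    exact Finset.sum_nonneg fun i _ => mul_nonneg (hα i).le (hgpos i x).le
  set C : ℝ := ∑ i, α i * (Z i)⁻¹ with hC_def
  have hpC : ∀ x, p x ≤ C := by
    intro x
    rw [hp' x, hC_def]
    refine Finset.sum_le_sum fun i _ => ?_
    refine mul_le_mul_of_nonneg_left ?_ (hα i).le
    rw [hg_eq]
    have hexp : Real.exp (-β i * |x - m| ^ θ i) ≤ 1 := by
      apply Real.exp_le_one_iff.mpr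
      have : 0 ≤ β i * |x - m| ^ θ i :=
        mul_nonneg (hβ i).le (Real.rpow_nonneg (abs_nonneg _) _)
      linarith
    calc (Z i)⁻¹ * Real.exp (-β i * |x - m| ^ θ i) ≤ (Z i)⁻¹ * 1 :=
          mul_le_mul_of_nonneg_left hexp (inv_pos.mpr (hZpos i)).le
      _ = (Z i)⁻¹ := mul_one _
  have hC_pos : 0 < C := by
    rw [hC_def]
    have : Nonempty (Fin n) := ⟨⟨0, hn⟩⟩
    exact Finset.sum_pos (fun i _ => mul_pos (hα i) (inv_pos.mpr (hZpos i)))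
      Finset.univ_nonempty
  -- continuity
  have hcont_g : ∀ i, Continuous (g i) := by
    intro i
    have h1 : Continuous fun x : ℝ => |x - m| ^ θ i := by
      rw [continuous_iff_continuousAt]
      intro x
      exact (Real.continuousAt_rpow_const _ _ (Or.inr (hθ i).le)).comp
        ((continuous_abs.comp (continuous_sub_right m)).continuousAt)
    have h2 : Continuous fun x : ℝ => Real.exp (-β i * |x - m| ^ θ i) :=
      Real.continuous_exp.comp (continuous_const.mul h1)
    have h3 : Continuous fun x : ℝ => (Z i)⁻¹ * Real.exp (-β i * |x - m| ^ θ i) :=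
      continuous_const.mul h2
    rwa [show g i = fun x : ℝ => (Z i)⁻¹ * Real.exp (-β i * |x - m| ^ θ i) from
      funext (hg_eq i)]
  have hcont_p : Continuous p := by
    have h1 : Continuous fun x : ℝ => ∑ i, α i * g i x :=
      continuous_finset_sum _ fun i _ => continuous_const.mul (hcont_g i)
    rwa [show p = fun x : ℝ => ∑ i, α i * g i x from funext hp']
  -- variance identity
  have hLHS : ∫ x : ℝ, (x - m) ^ 2 * p x = ∑ i, α i * σ2 i := by
    have e : ∀ x : ℝ, (x - m) ^ 2 * p x = ∑ i, α i * ((x - m) ^ 2 * g i x) := by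
      intro x
      rw [hp' x, Finset.mul_sum]
      exact Finset.sum_congr rfl fun i _ => by ring
    simp only [e]
    rw [integral_finset_sum Finset.univ fun i _ => (hx2gint i).const_mul (α i)]
    exact Finset.sum_congr rfl fun i _ => by rw [integral_const_mul, hF2 i]
  -- integrability of negMulLog ∘ p
  set K : ℝ := 2 + Real.sqrt (C + 1) * Real.log (C + 1) with hK_def
  have hK_nonneg : 0 ≤ K := by
    rw [hK_def]
    have h0 : (1:ℝ) ≤ C + 1 := by linarith
    have := mul_nonneg (Real.sqrt_nonneg (C + 1)) (Real.log_nonneg h0)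
    linarith
  have hsqint : ∀ i, Integrable (fun x : ℝ => Real.sqrt (α i * g i x)) := by
    intro i
    have heq : ∀ x : ℝ, Real.sqrt (α i * g i x)
        = Real.sqrt (α i * (Z i)⁻¹) *
          (|x - m| ^ (0:ℝ) * Real.exp (-(β i / 2) * |x - m| ^ θ i)) := by
      intro x
      rw [hg_eq, Real.rpow_zero, one_mul, ← mul_assoc,
        Real.sqrt_mul (mul_nonneg (hα i).le (inv_pos.mpr (hZpos i)).le) _, sqrt_exp']
      congr 2
      ring
    simp only [heq]
    exact (integrable_centered m (by norm_num) (hθ i) (half_pos (hβ i))).const_mul _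
  have hmajint : Integrable (fun x : ℝ => K * ∑ i, Real.sqrt (α i * g i x)) :=
    (integrable_finset_sum Finset.univ fun i _ => hsqint i).const_mul K
  have hbound : ∀ x : ℝ, ‖Real.negMulLog (p x)‖ ≤ K * ∑ i, Real.sqrt (α i * g i x) := by
    intro x
    rw [Real.norm_eq_abs]
    have h1 : |Real.negMulLog (p x)| ≤ K * Real.sqrt (p x) := by
      rw [hK_def]
      exact abs_negMulLog_le' (hp_nonneg x) (hpC x)
    have h2 : Real.sqrt (p x) ≤ ∑ i, Real.sqrt (α i * g i x) := by
      rw [hp' x]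
      exact sqrt_sum_le' Finset.univ _ fun i _ =>
        mul_nonneg (hα i).le (hgpos i x).le
    calc |Real.negMulLog (p x)| ≤ K * Real.sqrt (p x) := h1
      _ ≤ K * ∑ i, Real.sqrt (α i * g i x) := mul_le_mul_of_nonneg_left h2 hK_nonneg
  have hE1 : Integrable (fun x : ℝ => Real.negMulLog (p x)) :=
    hmajint.mono' (Real.continuous_negMulLog.comp hcont_p).aestronglyMeasurable
      (Filter.Eventually.of_forall hbound)
  -- entropy concavity
  have hE2 : ∑ i, α i * (Real.log (Z i) + 1 / θ i) ≤ ∫ x : ℝ, Real.negMulLog (p x) := by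
    have hpt : ∀ x : ℝ, ∑ i, α i * Real.negMulLog (g i x) ≤ Real.negMulLog (p x) := by
      intro x
      have h := Real.concaveOn_negMulLog.le_map_sum (t := Finset.univ) (w := α)
        (p := fun i => g i x) (fun i _ => (hα i).le) hsum
        (fun i _ => mem_Ici.mpr (hgpos i x).le)
      simp only [smul_eq_mul] at h
      rw [hp' x]
      exact h
    have hsum_int : Integrable (fun x : ℝ => ∑ i, α i * Real.negMulLog (g i x)) :=
      integrable_finset_sum Finset.univ fun i _ => (hnmlint i).const_mul (α i)
    have hmono := integral_mono hsum_int hE1 hpt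
    have heval : ∫ x : ℝ, ∑ i, α i * Real.negMulLog (g i x)
        = ∑ i, α i * (Real.log (Z i) + 1 / θ i) := by
      rw [integral_finset_sum Finset.univ fun i _ => (hnmlint i).const_mul (α i)]
      exact Finset.sum_congr rfl fun i _ => by rw [integral_const_mul, hF4 i]
    linarith [hmono, heval.ge, heval.le]
  -- relation between A, σ2 and Z
  have hσpos : ∀ i, 0 < σ2 i := by
    intro i
    rw [hσ2 i]
    have h1 : 0 < β i ^ (-(2 / θ i)) := Real.rpow_pos_of_pos (hβ i) _
    have := hΓ1 i; have := hΓ3 i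
    positivity
  have hApos : ∀ i, 0 < A (θ i) := by
    intro i
    rw [A]
    have := hΓ1 i; have := hΓ3 i; have := hθ i
    positivity
  have hAZ : ∀ i, A (θ i) * σ2 i = (Z i) ^ 2 * Real.exp (2 / θ i) := by
    intro i
    have hb2 : (β i ^ (-(1 / θ i))) ^ 2 = β i ^ (-(2 / θ i)) := by
      rw [← Real.rpow_natCast (β i ^ (-(1 / θ i))) 2, ← Real.rpow_mul (hβ i).le]
      congr 1
      push_cast
      ring
    rw [A, hσ2 i, hZ_eq i]
    rw [mul_pow, mul_pow, mul_pow, hb2]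
    have h1 := (hΓ1 i).ne'
    have h3 := (hΓ3 i).ne'
    have ht := (hθ i).ne'
    field_simp
    ring
  -- entropy
  have hent : -∫ x : ℝ, p x * Real.log (p x) = ∫ x : ℝ, Real.negMulLog (p x) := by
    rw [← integral_neg]
    congr 1
    funext x
    rw [Real.negMulLog]
    ring
  have hr1 : 1 ≤ r := by
    have := hr ⟨0, hn⟩ ⟨0, hn⟩
    rwa [div_self (hσpos ⟨0, hn⟩).ne'] at this
  -- exponential of entropy bound
  have hlogAZ : ∀ i, Real.log (A (θ i) * σ2 i) = 2 * (Real.log (Z i) + 1 / θ i) := by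
    intro i
    rw [hAZ i, Real.log_mul (pow_ne_zero 2 (hZpos i).ne') (Real.exp_ne_zero _),
      Real.log_pow, Real.log_exp]
    push_cast
    ring
  have hexp2 : Real.exp (∑ i, α i * Real.log (A (θ i) * σ2 i))
      ≤ Real.exp (2 * ∫ x : ℝ, Real.negMulLog (p x)) := by
    apply Real.exp_le_exp.mpr
    have he : ∑ i, α i * Real.log (A (θ i) * σ2 i)
        = 2 * ∑ i, α i * (Real.log (Z i) + 1 / θ i) := by
      rw [Finset.mul_sum]
      exact Finset.sum_congr rfl fun i _ => by rw [hlogAZ i]; ring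
    rw [he]
    linarith [hE2]
  have hprodAZ : Real.exp (∑ i, α i * Real.log (A (θ i) * σ2 i))
      = ∏ i, (A (θ i) * σ2 i) ^ α i := by
    rw [Real.exp_sum]
    exact Finset.prod_congr rfl fun i _ => by
      rw [Real.rpow_def_of_pos (mul_pos (hApos i) (hσpos i)), mul_comm]
  have hprodσ : Real.exp (∑ i, α i * Real.log (σ2 i)) = ∏ i, (σ2 i) ^ α i := by
    rw [Real.exp_sum]
    exact Finset.prod_congr rfl fun i _ => by
      rw [Real.rpow_def_of_pos (hσpos i), mul_comm]
  have hspecht := specht hn α σ2 r hα hsum hσpos hr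
  rw [hprodσ] at hspecht
  -- product manipulation
  have hprod_combine : (∏ i, (1 / A (θ i)) ^ α i) * ∏ i, (A (θ i) * σ2 i) ^ α i
      = ∏ i, (σ2 i) ^ α i := by
    rw [← Finset.prod_mul_distrib]
    refine Finset.prod_congr rfl fun i _ => ?_
    rw [← Real.mul_rpow (one_div_nonneg.mpr (hApos i).le) (mul_pos (hApos i) (hσpos i)).le]
    congr 1
    have hA := (hApos i).ne'
    field_simp
  have hprod_nonneg : 0 ≤ ∏ i, (1 / A (θ i)) ^ α i :=
    Finset.prod_nonneg fun i _ => Real.rpow_nonneg (one_div_nonneg.mpr (hApos i).le) _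
  have hMnn := M_nonneg hr1
  calc ∫ x : ℝ, (x - m) ^ 2 * p x = ∑ i, α i * σ2 i := hLHS
    _ ≤ M r * ∏ i, (σ2 i) ^ α i := hspecht
    _ = (M r * ∏ i, (1 / A (θ i)) ^ α i) * ∏ i, (A (θ i) * σ2 i) ^ α i := by
        rw [mul_assoc, hprod_combine]
    _ ≤ (M r * ∏ i, (1 / A (θ i)) ^ α i) * Real.exp (2 * ∫ x : ℝ, Real.negMulLog (p x)) := by
        apply mul_le_mul_of_nonneg_left _ (mul_nonneg hMnn hprod_nonneg)
        rw [← hprodAZ]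
        exact hexp2
    _ = M r * (∏ i, (1 / A (θ i)) ^ α i) *
        Real.exp (2 * (-∫ x : ℝ, p x * Real.log (p x))) := by
        rw [hent]
end
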